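/- arXiv:0806.3984 — 3 statements merged into one kernel-verified Lean document; each statement's English description precedes it below -/
import Mathlib

section
/- Let Ω^{A'B'AB} = (1/d²) Σ_{j,k} |j⟩⟨j|^{A'} ⊗ |k⟩⟨k|^{B'} ⊗ ρ_{jk}^{AB}, where ρ_{jk} = (X^j Z^k ⊗ I) ρ^{AB} (X^j Z^k ⊗ I)† for a state ρ^{AB} with dim A = d. Then S(A'|AB)_Ω = S(Z^A|B)_ρ, where S(Z^A|B)_ρ = S(ρ̄_{Z}^{AB}) − S(ρ^B) and ρ̄_Z^{AB} is ρ^{AB} dephased on A in the Z eigenbasis. -/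
open Matrix Kronecker ComplexOrder

noncomputable section

/-- ω = e^{2πi/d} -/
noncomputable def qomega (d : ℕ) : ℂ := Complex.exp (2 * Real.pi * Complex.I / d)

/-- Generalized Pauli Z: Z|k⟩ = ω^k |k⟩. -/
noncomputable def pauliZ (d : ℕ) : Matrix (Fin d) (Fin d) ℂ :=
  Matrix.diagonal fun k : Fin d => qomega d ^ (k : ℕ)

/-- Generalized Pauli X: X|k⟩ = |k+1 mod d⟩. -/
noncomputable def pauliX (d : ℕ) [NeZero d] : Matrix (Fin d) (Fin d) ℂ :=
  Matrix.of fun i j : Fin d => if i = j + 1 then 1 else 0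

/-- Fourier matrix: column j is |x̃_j⟩ = (1/√d) Σ_k ω^{jk} |k⟩. -/
noncomputable def fourierMat (d : ℕ) : Matrix (Fin d) (Fin d) ℂ :=
  Matrix.of fun k j : Fin d => qomega d ^ ((j : ℕ) * (k : ℕ)) / (Real.sqrt d : ℂ)

/-- density operator predicate -/
def IsDensity {n : Type*} [Fintype n] (ρ : Matrix n n ℂ) : Prop :=
  ρ.PosSemidef ∧ ρ.trace = 1

/-- von Neumann entropy in base 2, via eigenvalues. -/
noncomputable def vN {n : Type*} [Fintype n] [DecidableEq n] (ρ : Matrix n n ℂ) : ℝ :=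
  if h : ρ.IsHermitian then ∑ i, -(h.eigenvalues i * Real.logb 2 (h.eigenvalues i)) else 0

/-- complete dephasing in the standard basis -/
def dephase {n : Type*} [DecidableEq n] (M : Matrix n n ℂ) : Matrix n n ℂ :=
  Matrix.of fun i j => if i = j then M i j else 0

/-- dephasing of the first (A) factor of a bipartite state, standard (Z eigen-) basis -/
def dephaseA {a b : Type*} [DecidableEq a] (M : Matrix (a × b) (a × b) ℂ) :
    Matrix (a × b) (a × b) ℂ :=
  Matrix.of fun p q => if p.1 = q.1 then M p q else 0

/-- dephasing of the first (A) factor in the Fourier (X eigen-) basis -/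
noncomputable def dephaseXA (d : ℕ) {b : Type*} [Fintype b] [DecidableEq b]
    (M : Matrix (Fin d × b) (Fin d × b) ℂ) : Matrix (Fin d × b) (Fin d × b) ℂ :=
  (fourierMat d ⊗ₖ (1 : Matrix b b ℂ)) *
    dephaseA ((fourierMat d ⊗ₖ (1 : Matrix b b ℂ))ᴴ * M * (fourierMat d ⊗ₖ (1 : Matrix b b ℂ))) *
    (fourierMat d ⊗ₖ (1 : Matrix b b ℂ))ᴴ

/-- reduced state on A of a bipartite state -/
def r2A {a b : Type*} [Fintype b] (M : Matrix (a × b) (a × b) ℂ) : Matrix a a ℂ :=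
  Matrix.of fun i j => ∑ y : b, M (i, y) (j, y)

/-- reduced state on B of a bipartite state -/
def r2B {a b : Type*} [Fintype a] (M : Matrix (a × b) (a × b) ℂ) : Matrix b b ℂ :=
  Matrix.of fun i j => ∑ x : a, M (x, i) (x, j)

/-- reduced state on AB of a tripartite state on A ⊗ B ⊗ E -/
def rAB {a b e : Type*} [Fintype e] (M : Matrix (a × b × e) (a × b × e) ℂ) :
    Matrix (a × b) (a × b) ℂ :=
  Matrix.of fun p q => ∑ x : e, M (p.1, p.2, x) (q.1, q.2, x)

/-- reduced state on AE of a tripartite state -/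
def rAE {a b e : Type*} [Fintype b] (M : Matrix (a × b × e) (a × b × e) ℂ) :
    Matrix (a × e) (a × e) ℂ :=
  Matrix.of fun p q => ∑ y : b, M (p.1, y, p.2) (q.1, y, q.2)

/-- reduced state on A of a tripartite state -/
def rA {a b e : Type*} [Fintype b] [Fintype e] (M : Matrix (a × b × e) (a × b × e) ℂ) :
    Matrix a a ℂ :=
  Matrix.of fun i j => ∑ y : b, ∑ x : e, M (i, y, x) (j, y, x)

/-- reduced state on B of a tripartite state -/
def rB {a b e : Type*} [Fintype a] [Fintype e] (M : Matrix (a × b × e) (a × b × e) ℂ) :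
    Matrix b b ℂ :=
  Matrix.of fun i j => ∑ x : a, ∑ z : e, M (x, i, z) (x, j, z)

/-- reduced state on E of a tripartite state -/
def rE {a b e : Type*} [Fintype a] [Fintype b] (M : Matrix (a × b × e) (a × b × e) ℂ) :
    Matrix e e ℂ :=
  Matrix.of fun i j => ∑ x : a, ∑ y : b, M (x, y, i) (x, y, j)

/-- matrix logarithm (base 2) of a Hermitian matrix via spectral decomposition -/
noncomputable def mlog {n : Type*} [Fintype n] [DecidableEq n] (M : Matrix n n ℂ) :
    Matrix n n ℂ :=
  if h : M.IsHermitian then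
    (h.eigenvectorUnitary : Matrix n n ℂ) *
      Matrix.diagonal (fun i => (Real.logb 2 (h.eigenvalues i) : ℂ)) *
      (h.eigenvectorUnitary : Matrix n n ℂ)ᴴ
  else 0

/-- quantum relative entropy S(ρ‖σ) = Tr[ρ(log₂ρ − log₂σ)] -/
noncomputable def relEnt {n : Type*} [Fintype n] [DecidableEq n] (ρ σ : Matrix n n ℂ) : ℝ :=
  ((ρ * (mlog ρ - mlog σ)).trace).re

/-- trace norm of a Hermitian matrix -/
noncomputable def traceNorm {n : Type*} [Fintype n] [DecidableEq n] (M : Matrix n n ℂ) : ℝ :=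
  if h : M.IsHermitian then ∑ i, |h.eigenvalues i| else 0



namespace SApAB_aux
open Polynomial

section charpolyMachinery
variable {n : Type*} [Fintype n] [DecidableEq n]

lemma charpoly_diag (v : n → ℂ) :
    (Matrix.diagonal v).charpoly = ∏ i, (X - C (v i)) := by
  rw [Matrix.charpoly]
  have h : charmatrix (Matrix.diagonal v) = Matrix.diagonal (fun i => (X : ℂ[X]) - C (v i)) := by
    ext i j
    by_cases h : i = j
    · subst h; simp [charmatrix_apply_eq]
    · simp [charmatrix_apply_ne _ _ _ h, Matrix.diagonal_apply_ne _ h]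
  rw [h, Matrix.det_diagonal]

lemma charpoly_unitary_conj {U : Matrix n n ℂ} (hU : U ∈ Matrix.unitaryGroup n ℂ)
    (M : Matrix n n ℂ) : (U * M * star U).charpoly = M.charpoly := by
  have hU1 : U * star U = 1 := Matrix.mem_unitaryGroup_iff.mp hU
  have key : charmatrix (U * M * star U) =
      (U.map C) * charmatrix M * ((star U).map C) := by
    simp only [charmatrix, RingHom.mapMatrix_apply]
    rw [Matrix.mul_sub, Matrix.sub_mul]
    congr 1
    · have hc : (U.map (C : ℂ →+* ℂ[X])) * Matrix.scalar n (X : ℂ[X]) =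
          Matrix.scalar n (X : ℂ[X]) * U.map C :=
        (Matrix.scalar_commute (X : ℂ[X]) (fun r => Commute.all _ _) (U.map C)).symm
      rw [hc, Matrix.mul_assoc]
      rw [show (U.map (C : ℂ →+* ℂ[X])) * (star U).map C = 1 by
        rw [← Matrix.map_mul, hU1, Matrix.map_one _ (map_zero C) (map_one C)]]
      rw [Matrix.mul_one]
    · rw [Matrix.map_mul, Matrix.map_mul]
  rw [Matrix.charpoly, Matrix.charpoly, key, Matrix.det_mul, Matrix.det_mul]
  have : (U.map (C : ℂ →+* ℂ[X])).det * ((star U).map C).det = 1 := by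
    rw [← Matrix.det_mul, ← Matrix.map_mul, hU1, Matrix.map_one _ (map_zero C) (map_one C),
      Matrix.det_one]
  calc (U.map (C : ℂ →+* ℂ[X])).det * (charmatrix M).det * ((star U).map C).det
      = (charmatrix M).det * ((U.map (C : ℂ →+* ℂ[X])).det * ((star U).map C).det) := by ring
    _ = (charmatrix M).det := by rw [this, mul_one]

lemma herm_charpoly {M : Matrix n n ℂ} (hM : M.IsHermitian) :
    M.charpoly = ∏ i, (X - C ((hM.eigenvalues i : ℝ) : ℂ)) := by
  conv_lhs => rw [hM.spectral_theorem, Unitary.conjStarAlgAut_apply]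
  rw [charpoly_unitary_conj (hM.eigenvectorUnitary).2, charpoly_diag]
  rfl

lemma herm_smul_charpoly (c : ℝ) {M : Matrix n n ℂ} (hM : M.IsHermitian) :
    (((c : ℂ)) • M).charpoly = ∏ i, (X - C ((c * hM.eigenvalues i : ℝ) : ℂ)) := by
  have hrep : ((c : ℂ)) • M = (hM.eigenvectorUnitary : Matrix n n ℂ) *
      Matrix.diagonal (fun i => ((c * hM.eigenvalues i : ℝ) : ℂ)) *
      star (hM.eigenvectorUnitary : Matrix n n ℂ) := by
    conv_lhs => rw [hM.spectral_theorem, Unitary.conjStarAlgAut_apply]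
    rw [← smul_mul_assoc, ← mul_smul_comm]
    congr 2
    ext i j
    rcases eq_or_ne i j with rfl | h
    · simp [Function.comp, Complex.ofReal_mul]
    · simp [Matrix.diagonal_apply_ne _ h]
  rw [hrep, charpoly_unitary_conj (hM.eigenvectorUnitary).2, charpoly_diag]

lemma charmatrix_blockDiagonal {o m : Type*} [Fintype o] [DecidableEq o] [Fintype m]
    [DecidableEq m] (M : o → Matrix m m ℂ) :
    charmatrix (Matrix.blockDiagonal M) = Matrix.blockDiagonal (fun k => charmatrix (M k)) := by
  ext ⟨i, k⟩ ⟨j, k'⟩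
  simp only [charmatrix, RingHom.mapMatrix_apply, Matrix.sub_apply, Matrix.scalar_apply,
    Matrix.blockDiagonal_apply, Matrix.diagonal_apply, Matrix.map_apply, Prod.mk.injEq]
  by_cases h : k = k'
  · subst h
    by_cases hij : i = j <;> simp [hij]
  · simp [h]

lemma charpoly_blockDiagonal {o m : Type*} [Fintype o] [DecidableEq o] [Fintype m]
    [DecidableEq m] (M : o → Matrix m m ℂ) :
    (Matrix.blockDiagonal M).charpoly = ∏ k, (M k).charpoly := by
  rw [Matrix.charpoly, charmatrix_blockDiagonal, Matrix.det_blockDiagonal]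
  rfl

lemma sum_eig_eq_trace {M : Matrix n n ℂ} (hM : M.IsHermitian) :
    (∑ i, (hM.eigenvalues i : ℂ)) = M.trace := by
  conv_rhs => rw [hM.spectral_theorem, Unitary.conjStarAlgAut_apply]
  rw [Matrix.trace_mul_cycle, Matrix.mem_unitaryGroup_iff'.mp (hM.eigenvectorUnitary).2,
    one_mul, Matrix.trace_diagonal]
  rfl


lemma vN_eq_sum {ι : Type*} [Fintype ι] (M : Matrix n n ℂ) (hM : M.IsHermitian) (w : ι → ℝ)
    (hc : M.charpoly = ∏ i, (X - C ((w i : ℝ) : ℂ))) :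
    vN M = ∑ i, -(w i * Real.logb 2 (w i)) := by
  have h2 := herm_charpoly hM
  have hroots : Multiset.map (fun i => ((w i : ℝ) : ℂ)) Finset.univ.val =
      Multiset.map (fun j => ((hM.eigenvalues j : ℝ) : ℂ)) Finset.univ.val := by
    have e1 : ∏ i, (X - C ((w i : ℝ) : ℂ)) =
        ((Finset.univ.val.map fun i => ((w i : ℝ) : ℂ)).map fun a => X - C a).prod := by
      rw [Multiset.map_map]; rfl
    have e2 : ∏ j, (X - C ((hM.eigenvalues j : ℝ) : ℂ)) =
        ((Finset.univ.val.map fun j => ((hM.eigenvalues j : ℝ) : ℂ)).map fun a => X - C a).prod := by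
      rw [Multiset.map_map]; rfl
    have h3 := congrArg Polynomial.roots (hc.symm.trans h2)
    rwa [e1, e2, roots_multiset_prod_X_sub_C, roots_multiset_prod_X_sub_C] at h3
  have key : ∑ i, (fun z : ℂ => -(z.re * Real.logb 2 z.re)) ((w i : ℝ) : ℂ)
      = ∑ j, (fun z : ℂ => -(z.re * Real.logb 2 z.re)) ((hM.eigenvalues j : ℝ) : ℂ) := by
    have h4 := congrArg (fun s => (Multiset.map (fun z : ℂ => -(z.re * Real.logb 2 z.re)) s).sum)
      hroots
    simp only [Multiset.map_map, Function.comp] at h4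
    rw [Finset.sum, Finset.sum]
    exact h4
  simp only [Complex.ofReal_re] at key
  rw [vN, dif_pos hM, ← key]

end charpolyMachinery

section pauli
variable {d : ℕ} [NeZero d] {b : Type*} [Fintype b] [DecidableEq b]

lemma qomega_prim : IsPrimitiveRoot (qomega d) d := by
  have := Complex.isPrimitiveRoot_exp d (NeZero.ne d)
  exact this

lemma qomega_ne_zero : qomega d ≠ 0 := Complex.exp_ne_zero _

lemma star_qomega : star (qomega d) = (qomega d)⁻¹ := by
  rw [qomega, Complex.star_def, ← Complex.exp_conj, ← Complex.exp_neg]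
  congr 1
  simp only [map_div₀, _root_.map_mul, Complex.conj_I, Complex.conj_ofReal, map_ofNat,
    Complex.conj_natCast]
  ring

lemma rou_sum (m m' : Fin d) :
    ∑ k : Fin d, qomega d ^ ((m : ℕ) * (k : ℕ)) * star (qomega d ^ ((m' : ℕ) * (k : ℕ)))
      = if m = m' then (d : ℂ) else 0 := by
  have hne : qomega d ≠ 0 := qomega_ne_zero
  have hterm : ∀ k : ℕ, qomega d ^ ((m : ℕ) * k) * star (qomega d ^ ((m' : ℕ) * k))
      = (qomega d ^ (m : ℕ) * (qomega d ^ (m' : ℕ))⁻¹) ^ k := by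
    intro k
    rw [star_pow, star_qomega, mul_pow, pow_mul, pow_mul, inv_pow, inv_pow]
  simp only [hterm]
  rcases eq_or_ne m m' with rfl | h
  · simp [mul_inv_cancel₀ (pow_ne_zero _ hne)]
  · have hζd : (qomega d ^ (m : ℕ) * (qomega d ^ (m' : ℕ))⁻¹) ^ d = 1 := by
      rw [mul_pow, inv_pow, ← pow_mul, ← pow_mul, mul_comm (m : ℕ) d, mul_comm (m' : ℕ) d,
        pow_mul, pow_mul, qomega_prim.pow_eq_one, one_pow, one_pow, inv_one, mul_one]
    have hζ1 : qomega d ^ (m : ℕ) * (qomega d ^ (m' : ℕ))⁻¹ ≠ 1 := by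
      intro hc
      apply h
      have : qomega d ^ (m : ℕ) = qomega d ^ (m' : ℕ) := by
        field_simp at hc
        exact hc
      exact Fin.ext (qomega_prim.pow_inj m.isLt m'.isLt this)
    rw [if_neg h, Fin.sum_univ_eq_sum_range, geom_sum_eq hζ1, hζd, sub_self, zero_div]

open Fin.NatCast in
lemma pauliX_pow_apply (j : ℕ) (i i' : Fin d) :
    (pauliX d ^ j) i i' = if i = i' + (j : Fin d) then 1 else 0 := by
  induction j generalizing i i' with
  | zero => simp [Matrix.one_apply, eq_comm]
  | succ j ih =>
    rw [pow_succ, Matrix.mul_apply]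
    have hterm : ∀ c : Fin d, (pauliX d ^ j) i c * pauliX d c i'
        = (if i = c + (j : Fin d) then 1 else 0) * (if c = i' + 1 then 1 else 0) := by
      intro c; rw [ih, pauliX]; rfl
    simp only [hterm]
    rw [Finset.sum_eq_single (i' + 1)]
    · rw [if_pos rfl, mul_one]
      have harg : i' + 1 + (j : Fin d) = i' + ((j : ℕ) + 1 : ℕ) := by push_cast; abel
      rw [harg]
    · intro c _ hc
      rw [if_neg hc, mul_zero]
    · intro hc
      exact absurd (Finset.mem_univ _) hc

lemma pauliZ_pow_apply (k : ℕ) (i i' : Fin d) :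
    (pauliZ d ^ k) i i' = if i = i' then qomega d ^ ((i' : ℕ) * k) else 0 := by
  rw [pauliZ, Matrix.diagonal_pow]
  rcases eq_or_ne i i' with rfl | h
  · simp [Matrix.diagonal_apply_eq, pow_mul]
  · simp [Matrix.diagonal_apply_ne _ h, h]

lemma pauliXZ_apply (j k : Fin d) (i i' : Fin d) :
    (pauliX d ^ (j : ℕ) * pauliZ d ^ (k : ℕ)) i i'
      = if i = i' + j then qomega d ^ ((i' : ℕ) * (k : ℕ)) else 0 := by
  rw [Matrix.mul_apply]
  simp only [pauliX_pow_apply, pauliZ_pow_apply, Fin.cast_val_eq_self]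
  rw [Finset.sum_eq_single i']
  · rw [if_pos rfl]
    rcases eq_or_ne i (i' + j) with h | h
    · rw [if_pos h, if_pos h, one_mul]
    · rw [if_neg h, if_neg h, zero_mul]
  · intro c _ hc; rw [if_neg hc, mul_zero]
  · intro hc; exact absurd (Finset.mem_univ _) hc


lemma U_apply (j k : Fin d) (p q : Fin d × b) :
    ((pauliX d ^ (j : ℕ) * pauliZ d ^ (k : ℕ)) ⊗ₖ (1 : Matrix b b ℂ)) p q
      = (if p.1 = q.1 + j then qomega d ^ ((q.1 : ℕ) * (k : ℕ)) else 0)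
        * (if p.2 = q.2 then 1 else 0) := by
  rw [Matrix.kroneckerMap_apply, pauliXZ_apply, Matrix.one_apply]

lemma Mjk_apply (j k : Fin d) (ρ : Matrix (Fin d × b) (Fin d × b) ℂ) (i i' : Fin d) (s s' : b) :
    (((pauliX d ^ (j : ℕ) * pauliZ d ^ (k : ℕ)) ⊗ₖ (1 : Matrix b b ℂ)) * ρ *
      ((pauliX d ^ (j : ℕ) * pauliZ d ^ (k : ℕ)) ⊗ₖ (1 : Matrix b b ℂ))ᴴ) (i, s) (i', s')
    = qomega d ^ (((i - j : Fin d) : ℕ) * (k : ℕ))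
      * star (qomega d ^ (((i' - j : Fin d) : ℕ) * (k : ℕ)))
      * ρ (i - j, s) (i' - j, s') := by
  set A := ((pauliX d ^ (j : ℕ) * pauliZ d ^ (k : ℕ)) ⊗ₖ (1 : Matrix b b ℂ)) with hA
  have inner : ∀ q : Fin d × b, (∑ p, A (i, s) p * ρ p q)
      = qomega d ^ (((i - j : Fin d) : ℕ) * (k : ℕ)) * ρ (i - j, s) q := by
    intro q
    rw [Finset.sum_eq_single ((i - j : Fin d), s)]
    · rw [hA, U_apply]
      rw [if_pos (by simp [sub_add_cancel]), if_pos rfl, mul_one]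
    · intro p _ hp
      rw [hA, U_apply]
      by_cases h1 : i = p.1 + j
      · have hp1 : p.1 = i - j := by rw [h1, add_sub_cancel_right]
        have hp2 : ¬((i, s).2 = p.2) := by
          intro hc; exact hp (Prod.ext hp1 hc.symm)
        rw [if_neg hp2, mul_zero, zero_mul]
      · rw [if_neg h1, zero_mul, zero_mul]
    · intro hc; exact absurd (Finset.mem_univ _) hc
  rw [Matrix.mul_apply]
  have houter : ∀ q : Fin d × b, (A * ρ) (i, s) q * Aᴴ q (i', s')
      = (qomega d ^ (((i - j : Fin d) : ℕ) * (k : ℕ)) * ρ (i - j, s) q)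
        * star (A (i', s') q) := by
    intro q
    rw [Matrix.mul_apply, inner, Matrix.conjTranspose_apply]
  simp only [houter]
  rw [Finset.sum_eq_single ((i' - j : Fin d), s')]
  · rw [hA, U_apply]
    rw [if_pos (by simp [sub_add_cancel]), if_pos rfl, mul_one, mul_assoc, mul_comm (ρ _ _),
      ← mul_assoc]
  · intro q _ hq
    rw [hA, U_apply]
    by_cases h1 : i' = q.1 + j
    · have hq1 : q.1 = i' - j := by rw [h1, add_sub_cancel_right]
      have hq2 : ¬((i', s').2 = q.2) := fun hc => hq (Prod.ext hq1 hc.symm)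
      rw [if_neg hq2, mul_zero, star_zero, mul_zero]
    · rw [if_neg h1, zero_mul, star_zero, mul_zero]
  · intro hc; exact absurd (Finset.mem_univ _) hc


def Om (ρ : Matrix (Fin d × b) (Fin d × b) ℂ) :
    Matrix ((Fin d × Fin d) × Fin d × b) ((Fin d × Fin d) × Fin d × b) ℂ :=
  ((((d : ℂ)) ^ 2)⁻¹ • ∑ j : Fin d, ∑ k : Fin d,
      (Matrix.single j j (1 : ℂ) ⊗ₖ Matrix.single k k (1 : ℂ)) ⊗ₖ
        (((pauliX d ^ (j : ℕ) * pauliZ d ^ (k : ℕ)) ⊗ₖ (1 : Matrix b b ℂ)) * ρ *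
          ((pauliX d ^ (j : ℕ) * pauliZ d ^ (k : ℕ)) ⊗ₖ (1 : Matrix b b ℂ))ᴴ))

lemma Om_apply (ρ : Matrix (Fin d × b) (Fin d × b) ℂ) (x y x' y' : Fin d) (p q : Fin d × b) :
    Om ρ ((x, y), p) ((x', y'), q)
      = (((d : ℂ)) ^ 2)⁻¹ * (if x = x' ∧ y = y' then
          qomega d ^ (((p.1 - x : Fin d) : ℕ) * (y : ℕ))
            * star (qomega d ^ (((q.1 - x : Fin d) : ℕ) * (y : ℕ)))
            * ρ (p.1 - x, p.2) (q.1 - x, q.2) else 0) := by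
  rw [Om, Matrix.smul_apply, Matrix.sum_apply, smul_eq_mul]
  congr 1
  have hterm : ∀ j : Fin d, (∑ k : Fin d,
      (Matrix.single j j (1 : ℂ) ⊗ₖ Matrix.single k k (1 : ℂ)) ⊗ₖ
        (((pauliX d ^ (j : ℕ) * pauliZ d ^ (k : ℕ)) ⊗ₖ (1 : Matrix b b ℂ)) * ρ *
          ((pauliX d ^ (j : ℕ) * pauliZ d ^ (k : ℕ)) ⊗ₖ (1 : Matrix b b ℂ))ᴴ))
        ((x, y), p) ((x', y'), q)
      = ∑ k : Fin d, (if j = x ∧ j = x' then 1 else 0) * ((if k = y ∧ k = y' then 1 else 0) *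
          (qomega d ^ (((p.1 - j : Fin d) : ℕ) * (k : ℕ))
            * star (qomega d ^ (((q.1 - j : Fin d) : ℕ) * (k : ℕ)))
            * ρ (p.1 - j, p.2) (q.1 - j, q.2))) := by
    intro j
    rw [Matrix.sum_apply]
    refine Finset.sum_congr rfl fun k _ => ?_
    rw [show (p : Fin d × b) = (p.1, p.2) from rfl, show (q : Fin d × b) = (q.1, q.2) from rfl,
      Matrix.kroneckerMap_apply, Matrix.kroneckerMap_apply, Mjk_apply]
    simp only [Matrix.single, Matrix.of_apply]
    ring
  simp only [hterm]
  rw [Finset.sum_comm]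
  rw [Finset.sum_eq_single y]
  · rw [Finset.sum_eq_single x]
    · by_cases hx : x = x'
      · by_cases hy : y = y'
        · simp [hx, hy]
        · simp [hx, hy]
      · simp [hx]
    · intro j _ hj
      rw [if_neg (fun hc => hj hc.1), zero_mul]
    · intro hc; exact absurd (Finset.mem_univ _) hc
  · intro k _ hk
    refine Finset.sum_eq_zero fun j _ => ?_
    rw [if_neg (show ¬(k = y ∧ k = y') from fun hc => hk hc.1), zero_mul, mul_zero]
  · intro hc; exact absurd (Finset.mem_univ _) hc

def eqv1 {d : ℕ} (b : Type*) : (b × (Fin d × Fin d)) ≃ (Fin d × Fin d × b) where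
  toFun := fun x => (x.2.1, x.2.2, x.1)
  invFun := fun x => (x.2.2, (x.1, x.2.1))
  left_inv := fun _ => rfl
  right_inv := fun _ => rfl

lemma E1 (ρ : Matrix (Fin d × b) (Fin d × b) ℂ) :
    (Matrix.of fun p q : Fin d × Fin d × b => ∑ y : Fin d, Om ρ ((p.1, y), p.2) ((q.1, y), q.2))
      = Matrix.reindex (eqv1 b) (eqv1 b) (Matrix.blockDiagonal fun ai : Fin d × Fin d =>
          ((d : ℂ))⁻¹ • (Matrix.of fun s s' : b => ρ (ai.2 - ai.1, s) (ai.2 - ai.1, s'))) := by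
  have hd : (d : ℂ) ≠ 0 := Nat.cast_ne_zero.mpr (NeZero.ne d)
  ext ⟨a, i, s⟩ ⟨a', i', s'⟩
  rw [Matrix.of_apply]
  have hsum : (∑ y : Fin d, Om ρ ((a, y), (i, s)) ((a', y), (i', s')))
      = (((d : ℂ)) ^ 2)⁻¹ * (if a = a' then
          (∑ y : Fin d, qomega d ^ (((i - a : Fin d) : ℕ) * (y : ℕ))
            * star (qomega d ^ (((i' - a : Fin d) : ℕ) * (y : ℕ)))) * ρ (i - a, s) (i' - a, s')
          else 0) := by
    rcases eq_or_ne a a' with rfl | h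
    · rw [if_pos rfl]
      calc (∑ y : Fin d, Om ρ ((a, y), (i, s)) ((a, y), (i', s')))
          = ∑ y : Fin d, (((d : ℂ)) ^ 2)⁻¹ *
              (qomega d ^ (((i - a : Fin d) : ℕ) * (y : ℕ))
                * star (qomega d ^ (((i' - a : Fin d) : ℕ) * (y : ℕ)))
                * ρ (i - a, s) (i' - a, s')) := by
            refine Finset.sum_congr rfl fun y _ => ?_
            rw [Om_apply, if_pos ⟨rfl, rfl⟩]
        _ = (((d : ℂ)) ^ 2)⁻¹ * ((∑ y : Fin d, qomega d ^ (((i - a : Fin d) : ℕ) * (y : ℕ))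
                * star (qomega d ^ (((i' - a : Fin d) : ℕ) * (y : ℕ))))
                * ρ (i - a, s) (i' - a, s')) := by
            rw [← Finset.mul_sum, Finset.sum_mul]
    · rw [if_neg h]
      rw [Finset.sum_eq_zero, mul_zero]
      intro y _
      rw [Om_apply, if_neg (fun hc => h hc.1), mul_zero]
  rw [hsum, rou_sum]
  rw [Matrix.reindex_apply, Matrix.submatrix_apply]
  rw [show (eqv1 b).symm (a, i, s) = (s, (a, i)) from rfl,
    show (eqv1 b).symm (a', i', s') = (s', (a', i')) from rfl]
  rw [Matrix.blockDiagonal_apply]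
  rcases eq_or_ne a a' with rfl | ha
  · rcases eq_or_ne i i' with rfl | hi
    · rw [if_pos rfl, if_pos rfl, if_pos rfl, Matrix.smul_apply, Matrix.of_apply, smul_eq_mul]
      field_simp
    · rw [if_pos rfl, if_neg (sub_left_injective.ne hi),
        if_neg (fun hc : (a, i) = (a, i') => hi (congrArg Prod.snd hc)), zero_mul, mul_zero]
  · rw [if_neg ha, if_neg (fun hc : (a, i) = (a', i') => ha (congrArg Prod.fst hc)), mul_zero]

lemma E2 (ρ : Matrix (Fin d × b) (Fin d × b) ℂ) :
    (Matrix.of fun p q : Fin d × b =>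
        ∑ x : Fin d, ∑ y : Fin d, Om ρ ((x, y), p) ((x, y), q))
      = Matrix.reindex (Equiv.prodComm b (Fin d)) (Equiv.prodComm b (Fin d))
          (Matrix.blockDiagonal fun _ : Fin d => ((d : ℂ))⁻¹ • r2B ρ) := by
  have hd : (d : ℂ) ≠ 0 := Nat.cast_ne_zero.mpr (NeZero.ne d)
  ext ⟨i, s⟩ ⟨i', s'⟩
  rw [Matrix.of_apply]
  have hsum : ∀ x : Fin d, (∑ y : Fin d, Om ρ ((x, y), (i, s)) ((x, y), (i', s')))
      = (((d : ℂ)) ^ 2)⁻¹ * ((if (i - x : Fin d) = i' - x then (d : ℂ) else 0)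
          * ρ (i - x, s) (i' - x, s')) := by
    intro x
    rw [← rou_sum (i - x) (i' - x)]
    calc (∑ y : Fin d, Om ρ ((x, y), (i, s)) ((x, y), (i', s')))
        = ∑ y : Fin d, (((d : ℂ)) ^ 2)⁻¹ *
            (qomega d ^ (((i - x : Fin d) : ℕ) * (y : ℕ))
              * star (qomega d ^ (((i' - x : Fin d) : ℕ) * (y : ℕ)))
              * ρ (i - x, s) (i' - x, s')) := by
          refine Finset.sum_congr rfl fun y _ => ?_
          rw [Om_apply, if_pos ⟨rfl, rfl⟩]
      _ = _ := by rw [← Finset.mul_sum, Finset.sum_mul]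
  simp only [hsum]
  rw [Matrix.reindex_apply, Matrix.submatrix_apply]
  rw [show (Equiv.prodComm b (Fin d)).symm (i, s) = (s, i) from rfl,
    show (Equiv.prodComm b (Fin d)).symm (i', s') = (s', i') from rfl]
  rw [Matrix.blockDiagonal_apply]
  rcases eq_or_ne i i' with rfl | hi
  · rw [if_pos rfl, Matrix.smul_apply, smul_eq_mul]
    have hbij : (∑ x : Fin d, ρ (i - x, s) (i - x, s')) = r2B ρ s s' := by
      rw [r2B, Matrix.of_apply]
      exact Fintype.sum_equiv (Equiv.subLeft i) _ _ (fun x => rfl)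
    have hstep : ∀ x : Fin d, (((d : ℂ)) ^ 2)⁻¹ *
        ((if (i - x : Fin d) = i - x then (d : ℂ) else 0) * ρ (i - x, s) (i - x, s'))
        = (((d : ℂ)) ^ 2)⁻¹ * (d : ℂ) * ρ (i - x, s) (i - x, s') := by
      intro x; rw [if_pos rfl, ← mul_assoc]
    rw [Finset.sum_congr rfl (fun x _ => hstep x), ← Finset.mul_sum, hbij]
    field_simp
  · rw [if_neg hi, Finset.sum_eq_zero]
    intro x _
    rw [if_neg (fun hc => hi (sub_left_inj.mp hc)), zero_mul, mul_zero]


lemma isHermitian_blockDiagonal {o m : Type*} [Fintype o] [DecidableEq o] [Fintype m]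
    [DecidableEq m] (M : o → Matrix m m ℂ) (h : ∀ k, (M k).IsHermitian) :
    (Matrix.blockDiagonal M).IsHermitian := by
  show (Matrix.blockDiagonal M)ᴴ = Matrix.blockDiagonal M
  rw [Matrix.blockDiagonal_conjTranspose]
  exact congrArg _ (funext h)

lemma isHermitian_reindex {n' m' : Type*} [Fintype n'] [DecidableEq n'] [Fintype m']
    [DecidableEq m'] (e : n' ≃ m') {M : Matrix n' n' ℂ} (h : M.IsHermitian) :
    (Matrix.reindex e e M).IsHermitian := by
  rw [Matrix.reindex_apply]
  exact h.submatrix _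

lemma Edephase (ρ : Matrix (Fin d × b) (Fin d × b) ℂ) :
    dephaseA ρ = Matrix.reindex (Equiv.prodComm b (Fin d)) (Equiv.prodComm b (Fin d))
      (Matrix.blockDiagonal fun m : Fin d =>
        ρ.submatrix (fun s => (m, s)) (fun s => (m, s))) := by
  ext ⟨m, s⟩ ⟨m', s'⟩
  rw [dephaseA, Matrix.of_apply, Matrix.reindex_apply, Matrix.submatrix_apply,
    show (Equiv.prodComm b (Fin d)).symm (m, s) = (s, m) from rfl,
    show (Equiv.prodComm b (Fin d)).symm (m', s') = (s', m') from rfl,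
    Matrix.blockDiagonal_apply]
  rcases eq_or_ne m m' with rfl | h
  · rw [if_pos rfl, if_pos rfl, Matrix.submatrix_apply]
  · rw [if_neg h, if_neg h]

lemma F_scale (d : ℕ) [NeZero d] {x : ℝ} (hx : 0 ≤ x) :
    -(((d : ℝ)⁻¹ * x) * Real.logb 2 ((d : ℝ)⁻¹ * x))
      = (d : ℝ)⁻¹ * -(x * Real.logb 2 x) + (d : ℝ)⁻¹ * x * Real.logb 2 d := by
  have hdpos : (0 : ℝ) < d := Nat.cast_pos.mpr (Nat.pos_of_ne_zero (NeZero.ne d))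
  rcases hx.eq_or_lt with h | h
  · rw [← h]; simp
  · have hlog : Real.logb 2 ((d : ℝ)⁻¹ * x) = Real.logb 2 x - Real.logb 2 d := by
      rw [show (d : ℝ)⁻¹ * x = x / d by ring, Real.logb_div (ne_of_gt h) (ne_of_gt hdpos)]
    rw [hlog]; ring
end pauli

end SApAB_aux

open SApAB_aux

set_option maxHeartbeats 2000000 in
/-- for the classically-correlated extension
Ω = (1/d²) Σ_{jk} |j⟩⟨j| ⊗ |k⟩⟨k| ⊗ ρ_{jk} with ρ_{jk} = (X^jZ^k ⊗ 1)ρ(X^jZ^k ⊗ 1)†,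
one has S(A'|AB)_Ω = S(Z^A|B)_ρ. -/
theorem SApAB_eq_SZAB (d : ℕ) [NeZero d] {b : Type*} [Fintype b] [DecidableEq b]
    (ρ : Matrix (Fin d × b) (Fin d × b) ℂ) (hρ : IsDensity ρ) :
    (fun Ω : Matrix ((Fin d × Fin d) × Fin d × b) ((Fin d × Fin d) × Fin d × b) ℂ =>
      vN (Matrix.of fun p q : Fin d × Fin d × b =>
            ∑ y : Fin d, Ω ((p.1, y), p.2) ((q.1, y), q.2))
        - vN (Matrix.of fun p q : Fin d × b =>
            ∑ x : Fin d, ∑ y : Fin d, Ω ((x, y), p) ((x, y), q)))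
      ((((d : ℂ)) ^ 2)⁻¹ • ∑ j : Fin d, ∑ k : Fin d,
      (Matrix.single j j (1 : ℂ) ⊗ₖ Matrix.single k k (1 : ℂ)) ⊗ₖ
        (((pauliX d ^ (j : ℕ) * pauliZ d ^ (k : ℕ)) ⊗ₖ (1 : Matrix b b ℂ)) * ρ *
          ((pauliX d ^ (j : ℕ) * pauliZ d ^ (k : ℕ)) ⊗ₖ (1 : Matrix b b ℂ))ᴴ)
      : Matrix ((Fin d × Fin d) × Fin d × b) ((Fin d × Fin d) × Fin d × b) ℂ)
    = vN (dephaseA ρ) - vN (r2B ρ) := by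
  classical
  obtain ⟨hpsd, htr⟩ := hρ
  have hdnat : 0 < d := Nat.pos_of_ne_zero (NeZero.ne d)
  have hd0 : (d : ℝ) ≠ 0 := Nat.cast_ne_zero.mpr (NeZero.ne d)
  set τ : Fin d → Matrix b b ℂ :=
    fun m => ρ.submatrix (fun s => (m, s)) (fun s => (m, s)) with hτdef
  have hτpsd : ∀ m, (τ m).PosSemidef := fun m => hpsd.submatrix _
  have hτH : ∀ m, (τ m).IsHermitian := fun m => (hτpsd m).1
  have hr2 : r2B ρ = ∑ m : Fin d, τ m := by
    ext s s'
    rw [r2B, Matrix.of_apply, Matrix.sum_apply]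
    rfl
  have hr2psd : (r2B ρ).PosSemidef := by
    rw [hr2]
    exact Finset.sum_induction τ (fun A => A.PosSemidef)
      (fun _ _ h1 h2 => h1.add h2) Matrix.PosSemidef.zero (fun m _ => hτpsd m)
  have hr2H : (r2B ρ).IsHermitian := hr2psd.1
  set lam : Fin d → b → ℝ := fun m s => (hτH m).eigenvalues s with hlamdef
  set nu : b → ℝ := fun s => hr2H.eigenvalues s with hnudef
  have hlam0 : ∀ m s, 0 ≤ lam m s := fun m s => (hτpsd m).eigenvalues_nonneg s
  have hnu0 : ∀ s, 0 ≤ nu s := fun s => hr2psd.eigenvalues_nonneg s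
  -- traces
  have htrτ : ∑ m : Fin d, (τ m).trace = 1 := by
    rw [← htr, Matrix.trace]
    rw [show (∑ i, ρ.diag i) = ∑ p : Fin d × b, ρ p p from rfl, Fintype.sum_prod_type]
    rfl
  have hlamsum : ∑ m : Fin d, ∑ s : b, lam m s = 1 := by
    have hc : ((∑ m : Fin d, ∑ s : b, lam m s : ℝ) : ℂ) = 1 := by
      push_cast
      rw [Finset.sum_congr rfl (fun m _ => sum_eig_eq_trace (hτH m)), htrτ]
    exact_mod_cast hc
  have hnusum : ∑ s : b, nu s = 1 := by
    have htr2 : (r2B ρ).trace = 1 := by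
      rw [← htr, Matrix.trace, Matrix.trace]
      rw [show (∑ i, ρ.diag i) = ∑ p : Fin d × b, ρ p p from rfl, Fintype.sum_prod_type]
      rw [Finset.sum_comm]
      rfl
    have hc : ((∑ s : b, nu s : ℝ) : ℂ) = 1 := by
      push_cast
      rw [sum_eig_eq_trace hr2H, htr2]
    exact_mod_cast hc
  -- identify the two reduced matrices
  show vN (Matrix.of fun p q : Fin d × Fin d × b =>
      ∑ y : Fin d, (Om ρ) ((p.1, y), p.2) ((q.1, y), q.2))
    - vN (Matrix.of fun p q : Fin d × b =>
      ∑ x : Fin d, ∑ y : Fin d, (Om ρ) ((x, y), p) ((x, y), q))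
    = vN (dephaseA ρ) - vN (r2B ρ)
  rw [E1 ρ, E2 ρ, Edephase ρ]
  have hcast : ((d : ℂ))⁻¹ = (((d : ℝ)⁻¹ : ℝ) : ℂ) := by push_cast; ring
  -- Hermitian facts for the block matrices
  have hsmulH : ∀ m : Fin d, (((d : ℂ))⁻¹ • τ m).IsHermitian := by
    intro m
    show (((d : ℂ))⁻¹ • τ m)ᴴ = ((d : ℂ))⁻¹ • τ m
    rw [Matrix.conjTranspose_smul, hτH m]
    norm_num
  have hH1 : (Matrix.reindex (eqv1 b) (eqv1 b) (Matrix.blockDiagonal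
      fun ai : Fin d × Fin d => ((d : ℂ))⁻¹ •
        (Matrix.of fun s s' : b => ρ (ai.2 - ai.1, s) (ai.2 - ai.1, s')))).IsHermitian := by
    refine isHermitian_reindex _ (isHermitian_blockDiagonal _ fun ai => ?_)
    exact hsmulH (ai.2 - ai.1)
  have hH2 : (Matrix.reindex (Equiv.prodComm b (Fin d)) (Equiv.prodComm b (Fin d))
      (Matrix.blockDiagonal fun _ : Fin d => ((d : ℂ))⁻¹ • r2B ρ)).IsHermitian := by
    refine isHermitian_reindex _ (isHermitian_blockDiagonal _ fun _ => ?_)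
    show (((d : ℂ))⁻¹ • r2B ρ)ᴴ = ((d : ℂ))⁻¹ • r2B ρ
    rw [Matrix.conjTranspose_smul, hr2H]
    norm_num
  have hHD : (Matrix.reindex (Equiv.prodComm b (Fin d)) (Equiv.prodComm b (Fin d))
      (Matrix.blockDiagonal fun m : Fin d =>
        ρ.submatrix (fun s => (m, s)) (fun s => (m, s)))).IsHermitian :=
    isHermitian_reindex _ (isHermitian_blockDiagonal _ fun m => hτH m)
  -- charpoly computations and vN formulas
  open Polynomial in
  have hvN1 : vN (Matrix.reindex (eqv1 b) (eqv1 b) (Matrix.blockDiagonal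
      fun ai : Fin d × Fin d => ((d : ℂ))⁻¹ •
        (Matrix.of fun s s' : b => ρ (ai.2 - ai.1, s) (ai.2 - ai.1, s'))))
      = ∑ q : (Fin d × Fin d) × b,
          -(((d : ℝ)⁻¹ * lam (q.1.2 - q.1.1) q.2) *
            Real.logb 2 ((d : ℝ)⁻¹ * lam (q.1.2 - q.1.1) q.2)) := by
    refine vN_eq_sum _ hH1 (fun q : (Fin d × Fin d) × b =>
      (d : ℝ)⁻¹ * lam (q.1.2 - q.1.1) q.2) ?_
    rw [Matrix.charpoly_reindex, charpoly_blockDiagonal,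
      Fintype.prod_prod_type (fun q : (Fin d × Fin d) × b =>
        ((X : Polynomial ℂ) - C ((((d : ℝ)⁻¹ * lam (q.1.2 - q.1.1) q.2 : ℝ)) : ℂ)))]
    refine Finset.prod_congr rfl fun ai _ => ?_
    have hbe : (Matrix.of fun s s' : b => ρ (ai.2 - ai.1, s) (ai.2 - ai.1, s'))
        = τ (ai.2 - ai.1) := rfl
    rw [hbe, hcast, herm_smul_charpoly ((d : ℝ)⁻¹) (hτH (ai.2 - ai.1))]
  open Polynomial in
  have hvN2 : vN (Matrix.reindex (Equiv.prodComm b (Fin d)) (Equiv.prodComm b (Fin d))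
      (Matrix.blockDiagonal fun _ : Fin d => ((d : ℂ))⁻¹ • r2B ρ))
      = ∑ q : Fin d × b, -(((d : ℝ)⁻¹ * nu q.2) * Real.logb 2 ((d : ℝ)⁻¹ * nu q.2)) := by
    refine vN_eq_sum _ hH2 (fun q : Fin d × b => (d : ℝ)⁻¹ * nu q.2) ?_
    rw [Matrix.charpoly_reindex, charpoly_blockDiagonal, Fintype.prod_prod_type]
    refine Finset.prod_congr rfl fun i _ => ?_
    rw [hcast, herm_smul_charpoly ((d : ℝ)⁻¹) hr2H]
  open Polynomial in
  have hvND : vN (Matrix.reindex (Equiv.prodComm b (Fin d)) (Equiv.prodComm b (Fin d))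
      (Matrix.blockDiagonal fun m : Fin d =>
        ρ.submatrix (fun s => (m, s)) (fun s => (m, s))))
      = ∑ q : Fin d × b, -(lam q.1 q.2 * Real.logb 2 (lam q.1 q.2)) := by
    refine vN_eq_sum _ hHD (fun q : Fin d × b => lam q.1 q.2) ?_
    rw [Matrix.charpoly_reindex, charpoly_blockDiagonal, Fintype.prod_prod_type]
    exact Finset.prod_congr rfl fun m _ => herm_charpoly (hτH m)
  open Polynomial in
  have hvNB : vN (r2B ρ) = ∑ s : b, -(nu s * Real.logb 2 (nu s)) := by
    refine vN_eq_sum _ hr2H nu ?_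
    exact herm_charpoly hr2H
  rw [hvN1, hvN2, hvND, hvNB]
  -- pure real arithmetic
  set L : ℝ := Real.logb 2 d with hLdef
  set F : ℝ → ℝ := fun x => -(x * Real.logb 2 x) with hFdef
  have hSF : ∀ m s, F ((d : ℝ)⁻¹ * lam m s)
      = (d : ℝ)⁻¹ * F (lam m s) + (d : ℝ)⁻¹ * lam m s * L := fun m s => F_scale d (hlam0 m s)
  have hSN : ∀ s, F ((d : ℝ)⁻¹ * nu s)
      = (d : ℝ)⁻¹ * F (nu s) + (d : ℝ)⁻¹ * nu s * L := fun s => F_scale d (hnu0 s)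
  have h1 : (∑ q : (Fin d × Fin d) × b, F ((d : ℝ)⁻¹ * lam (q.1.2 - q.1.1) q.2))
      = (∑ q : Fin d × b, F (lam q.1 q.2)) + L := by
    have e1 : (∑ q : (Fin d × Fin d) × b, F ((d : ℝ)⁻¹ * lam (q.1.2 - q.1.1) q.2))
        = ∑ a : Fin d, ∑ i : Fin d, ∑ s : b, F ((d : ℝ)⁻¹ * lam (i - a) s) := by
      rw [Fintype.sum_prod_type]
      rw [show (∑ ai : Fin d × Fin d, ∑ s : b, F ((d : ℝ)⁻¹ * lam (ai.2 - ai.1) s))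
        = ∑ a : Fin d, ∑ i : Fin d, ∑ s : b, F ((d : ℝ)⁻¹ * lam (i - a) s) from
        Fintype.sum_prod_type _]
    have e2 : (∑ q : Fin d × b, F (lam q.1 q.2)) = ∑ m : Fin d, ∑ s : b, F (lam m s) :=
      Fintype.sum_prod_type _
    rw [e1, e2]
    have hshift : ∀ a : Fin d, (∑ i : Fin d, ∑ s : b, F ((d : ℝ)⁻¹ * lam (i - a) s))
        = ∑ m : Fin d, ∑ s : b, F ((d : ℝ)⁻¹ * lam m s) := by
      intro a
      exact Fintype.sum_equiv (Equiv.subRight a) _ _ (fun i => rfl)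
    rw [Finset.sum_congr rfl (fun a _ => hshift a), Finset.sum_const, Finset.card_univ,
      Fintype.card_fin, nsmul_eq_mul]
    have hinner : (∑ m : Fin d, ∑ s : b, F ((d : ℝ)⁻¹ * lam m s))
        = (d : ℝ)⁻¹ * (∑ m : Fin d, ∑ s : b, F (lam m s)) + (d : ℝ)⁻¹ * L := by
      rw [Finset.sum_congr rfl (fun m _ => Finset.sum_congr rfl (fun s _ => hSF m s))]
      rw [Finset.sum_congr rfl (fun m _ => Finset.sum_add_distrib), Finset.sum_add_distrib]
      congr 1
      · rw [Finset.mul_sum]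
        exact Finset.sum_congr rfl fun m _ => by rw [Finset.mul_sum]
      · have hstep : ∀ m : Fin d, (∑ s : b, (d : ℝ)⁻¹ * lam m s * L)
            = (d : ℝ)⁻¹ * (∑ s : b, lam m s) * L := by
          intro m
          rw [← Finset.sum_mul, ← Finset.mul_sum]
        rw [Finset.sum_congr rfl (fun m _ => hstep m), ← Finset.sum_mul, ← Finset.mul_sum,
          hlamsum, mul_one]
    rw [hinner]
    field_simp
  have h2 : (∑ q : Fin d × b, F ((d : ℝ)⁻¹ * nu q.2)) = (∑ s : b, F (nu s)) + L := by
    have e1 : (∑ q : Fin d × b, F ((d : ℝ)⁻¹ * nu q.2))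
        = ∑ _i : Fin d, ∑ s : b, F ((d : ℝ)⁻¹ * nu s) := Fintype.sum_prod_type _
    rw [e1, Finset.sum_const, Finset.card_univ, Fintype.card_fin, nsmul_eq_mul]
    have hinner : (∑ s : b, F ((d : ℝ)⁻¹ * nu s))
        = (d : ℝ)⁻¹ * (∑ s : b, F (nu s)) + (d : ℝ)⁻¹ * L := by
      rw [Finset.sum_congr rfl (fun s _ => hSN s), Finset.sum_add_distrib, ← Finset.mul_sum]
      congr 1
      rw [← Finset.sum_mul, ← Finset.mul_sum, hnusum, mul_one]
    rw [hinner]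
    field_simp
  rw [h1, h2]
  ring
end
end

section
/- Duality of conditional entropy for measured states: if |ρ⟩^{ABE} is a pure tripartite state, then S(Z^A|B)_ρ − S(Z^A|E)_ρ = S(A|B)_ρ, where S(Z^A|B) is the conditional entropy after dephasing A in the standard basis. -/
open Matrix Kronecker ComplexOrder

noncomputable section

section Helpers
open Polynomial



lemma det_smul_one_sub_eq {m : Type*} [Fintype m] [DecidableEq m]
    {M : Matrix m m ℂ} (hM : M.IsHermitian) (x : ℂ) :
    (x • (1 : Matrix m m ℂ) - M).det = ∏ i, (x - (hM.eigenvalues i : ℂ)) := by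
  have hU : (hM.eigenvectorUnitary : Matrix m m ℂ) * star (hM.eigenvectorUnitary : Matrix m m ℂ) = 1 :=
    (Matrix.mem_unitaryGroup_iff).mp hM.eigenvectorUnitary.2
  have key : x • (1 : Matrix m m ℂ) - M =
      (hM.eigenvectorUnitary : Matrix m m ℂ) *
        (x • (1 : Matrix m m ℂ) - Matrix.diagonal (RCLike.ofReal ∘ hM.eigenvalues)) *
        star (hM.eigenvectorUnitary : Matrix m m ℂ) := by
    rw [Matrix.mul_sub, Matrix.sub_mul, Matrix.mul_smul, mul_one, Matrix.smul_mul, hU,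
      ← Unitary.conjStarAlgAut_apply (S := ℂ), ← hM.spectral_theorem]
  rw [key, det_mul_right_comm, hU, one_mul]
  have : x • (1 : Matrix m m ℂ) - Matrix.diagonal (RCLike.ofReal ∘ hM.eigenvalues)
      = Matrix.diagonal (fun i => x - (hM.eigenvalues i : ℂ)) := by
    ext i j
    by_cases h : i = j <;> simp [h, Matrix.one_apply, Matrix.diagonal_apply]
  rw [this, det_diagonal]

lemma det_AB_BA {m n : Type*} [Fintype m] [DecidableEq m] [Fintype n] [DecidableEq n]
    (A : Matrix m n ℂ) (B : Matrix n m ℂ) {x : ℂ} (hx : x ≠ 0) :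
    (x • 1 - A * B).det * x ^ Fintype.card n = (x • 1 - B * A).det * x ^ Fintype.card m := by
  have hc : x * -x⁻¹ = -1 := by field_simp
  have e1 : x • (1 : Matrix m m ℂ) - A * B = x • (1 + A * ((-x⁻¹) • B)) := by
    rw [smul_add, Matrix.mul_smul, smul_smul, hc, neg_one_smul, sub_eq_add_neg]
  have e2 : x • (1 : Matrix n n ℂ) - B * A = x • (1 + ((-x⁻¹) • B) * A) := by
    rw [smul_add, Matrix.smul_mul, smul_smul, hc, neg_one_smul, sub_eq_add_neg]
  rw [e1, e2, Matrix.det_smul, Matrix.det_smul, Matrix.det_one_add_mul_comm]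
  ring

lemma sum_eig_eq {m n : Type*} [Fintype m] [DecidableEq m] [Fintype n] [DecidableEq n]
    {M : Matrix m m ℂ} {N : Matrix n n ℂ} (hM : M.IsHermitian) (hN : N.IsHermitian)
    (g : ℝ → ℝ) (hg : g 0 = 0)
    (h : ∀ x : ℂ, x ≠ 0 → (x • 1 - M).det * x ^ Fintype.card n
        = (x • 1 - N).det * x ^ Fintype.card m) :
    ∑ i, g (hM.eigenvalues i) = ∑ j, g (hN.eigenvalues j) := by
  classical
  set sM : Multiset ℂ := Finset.univ.val.map (fun i => (hM.eigenvalues i : ℂ)) with hsM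
  set sN : Multiset ℂ := Finset.univ.val.map (fun j => (hN.eigenvalues j : ℂ)) with hsN
  set P : ℂ[X] := (sM.map fun a => X - C a).prod * X ^ Fintype.card n with hP
  set Q : ℂ[X] := (sN.map fun a => X - C a).prod * X ^ Fintype.card m with hQ
  have hPQ : P = Q := by
    apply eq_of_infinite_eval_eq
    apply Set.Infinite.mono (s := {(0:ℂ)}ᶜ) _ ((Set.finite_singleton (0:ℂ)).infinite_compl)
    intro x hx
    have hx0 : x ≠ 0 := hx
    have hevP : eval x P = (∏ i, (x - (hM.eigenvalues i : ℂ))) * x ^ Fintype.card n := by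
      simp only [hP, eval_mul, eval_pow, eval_X, eval_multiset_prod, Multiset.map_map,
        Function.comp, eval_sub, eval_C, hsM, Finset.prod_eq_multiset_prod]
    have hevQ : eval x Q = (∏ j, (x - (hN.eigenvalues j : ℂ))) * x ^ Fintype.card m := by
      simp only [hQ, eval_mul, eval_pow, eval_X, eval_multiset_prod, Multiset.map_map,
        Function.comp, eval_sub, eval_C, hsN, Finset.prod_eq_multiset_prod]
    show eval x P = eval x Q
    rw [hevP, hevQ, ← det_smul_one_sub_eq hM, ← det_smul_one_sub_eq hN, h x hx0]
  have hPm : P.Monic :=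
    (monic_multiset_prod_of_monic sM _ (fun a _ => monic_X_sub_C a)).mul (monic_X_pow _)
  have hQm : Q.Monic :=
    (monic_multiset_prod_of_monic sN _ (fun a _ => monic_X_sub_C a)).mul (monic_X_pow _)
  have h1 : P.roots = sM + Fintype.card n • ({0} : Multiset ℂ) := by
    rw [hP, roots_mul hPm.ne_zero, roots_multiset_prod_X_sub_C, roots_pow, roots_X]
  have h2 : Q.roots = sN + Fintype.card m • ({0} : Multiset ℂ) := by
    rw [hQ, roots_mul hQm.ne_zero, roots_multiset_prod_X_sub_C, roots_pow, roots_X]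
  have hroots : sM + Fintype.card n • ({0} : Multiset ℂ)
      = sN + Fintype.card m • ({0} : Multiset ℂ) := by
    rw [← h1, ← h2, hPQ]
  have hsum := congrArg (fun s : Multiset ℂ => (s.map fun z => g z.re).sum) hroots
  simp only [Multiset.map_add, Multiset.sum_add, Multiset.nsmul_singleton,
    Multiset.map_replicate, Complex.zero_re, hg, Multiset.sum_replicate, smul_zero,
    add_zero, hsM, hsN, Multiset.map_map, Function.comp, Complex.ofReal_re] at hsum
  rw [Finset.sum_eq_multiset_sum, Finset.sum_eq_multiset_sum]
  exact hsum

lemma det_dephase_block {o m : Type*} [Fintype o] [DecidableEq o] [Fintype m] [DecidableEq m]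
    (f : o → Matrix m m ℂ) (x : ℂ) :
    (x • 1 - (Matrix.blockDiagonal f).submatrix (Equiv.prodComm o m) (Equiv.prodComm o m)).det
      = ∏ k, (x • (1 : Matrix m m ℂ) - f k).det := by
  have h : x • (1 : Matrix (o × m) (o × m) ℂ)
        - (Matrix.blockDiagonal f).submatrix (Equiv.prodComm o m) (Equiv.prodComm o m)
      = (Matrix.blockDiagonal fun k => x • 1 - f k).submatrix
          (Equiv.prodComm o m) (Equiv.prodComm o m) := by
    ext ⟨k, i⟩ ⟨k', j⟩
    simp only [Matrix.sub_apply, Matrix.smul_apply, Matrix.submatrix_apply,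
      Equiv.prodComm_apply, Prod.swap_prod_mk, Matrix.blockDiagonal_apply]
    by_cases hk : k = k'
    · subst hk
      by_cases hij : i = j <;> simp [Matrix.one_apply, hij, Prod.ext_iff]
    · simp [Matrix.one_apply, hk, Prod.ext_iff]
  rw [h, Matrix.det_submatrix_equiv_self, Matrix.det_blockDiagonal]

lemma det_transpose_trick {m : Type*} [Fintype m] [DecidableEq m]
    (M : Matrix m m ℂ) (x : ℂ) :
    (x • (1 : Matrix m m ℂ) - Mᵀ).det = (x • (1 : Matrix m m ℂ) - M).det := by
  rw [← Matrix.det_transpose (x • 1 - Mᵀ), Matrix.transpose_sub, Matrix.transpose_transpose,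
    Matrix.transpose_smul, Matrix.transpose_one]

lemma vN_eq_of_det {m n : Type*} [Fintype m] [DecidableEq m] [Fintype n] [DecidableEq n]
    {M : Matrix m m ℂ} {N : Matrix n n ℂ} (hM : M.IsHermitian) (hN : N.IsHermitian)
    (h : ∀ x : ℂ, x ≠ 0 → (x • 1 - M).det * x ^ Fintype.card n
        = (x • 1 - N).det * x ^ Fintype.card m) :
    vN M = vN N := by
  rw [vN, vN, dif_pos hM, dif_pos hN]
  exact sum_eig_eq hM hN (fun t => -(t * Real.logb 2 t)) (by simp) h


end Helpers

/-- duality for pure tripartite states: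
S(Z^A|B)_ρ − S(Z^A|E)_ρ = S(A|B)_ρ. -/
theorem dephased_cond_entropy_duality (d : ℕ) [NeZero d]
    {b e : Type*} [Fintype b] [DecidableEq b] [Fintype e] [DecidableEq e]
    (ψ : Fin d × b × e → ℂ) (hψ : ∑ p, Complex.normSq (ψ p) = 1) :
    (fun ρ : Matrix (Fin d × b × e) (Fin d × b × e) ℂ =>
      (vN (dephaseA (rAB ρ)) - vN (rB ρ)) - (vN (dephaseA (rAE ρ)) - vN (rE ρ))
        = vN (rAB ρ) - vN (rB ρ))
      (Matrix.of fun p q => ψ p * star (ψ q)) := by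
  beta_reduce
  set ρ : Matrix (Fin d × b × e) (Fin d × b × e) ℂ :=
    Matrix.of fun p q => ψ p * star (ψ q) with hρ
  set A₁ : Matrix (Fin d × b) e ℂ := Matrix.of fun p z => ψ (p.1, p.2, z) with hA₁
  set Cm : Fin d → Matrix b e ℂ := fun k => Matrix.of fun y z => ψ (k, y, z) with hCm
  have hAB : rAB ρ = A₁ * A₁ᴴ := by
    ext p q
    simp [rAB, Matrix.mul_apply, Matrix.conjTranspose_apply, hA₁, hρ]
  have hE : rE ρ = (A₁ᴴ * A₁)ᵀ := by
    ext z z'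
    simp [rE, Matrix.mul_apply, Matrix.conjTranspose_apply, Matrix.transpose_apply, hA₁, hρ,
      Fintype.sum_prod_type, mul_comm]
  have hdAB : dephaseA (rAB ρ) = (Matrix.blockDiagonal fun k => Cm k * (Cm k)ᴴ).submatrix
      (Equiv.prodComm (Fin d) b) (Equiv.prodComm (Fin d) b) := by
    ext ⟨k, y⟩ ⟨k', y'⟩
    simp only [Matrix.submatrix_apply, Equiv.prodComm_apply, Prod.swap_prod_mk,
      Matrix.blockDiagonal_apply, dephaseA, Matrix.of_apply]
    by_cases hk : k = k'
    · subst hk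
      simp [rAB, Matrix.mul_apply, Matrix.conjTranspose_apply, hCm, hρ]
    · simp [hk]
  have hdAE : dephaseA (rAE ρ) = (Matrix.blockDiagonal fun k => ((Cm k)ᴴ * Cm k)ᵀ).submatrix
      (Equiv.prodComm (Fin d) e) (Equiv.prodComm (Fin d) e) := by
    ext ⟨k, z⟩ ⟨k', z'⟩
    simp only [Matrix.submatrix_apply, Equiv.prodComm_apply, Prod.swap_prod_mk,
      Matrix.blockDiagonal_apply, dephaseA, Matrix.of_apply]
    by_cases hk : k = k'
    · subst hk
      simp [rAE, Matrix.mul_apply, Matrix.conjTranspose_apply, Matrix.transpose_apply,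
        hCm, hρ, mul_comm]
    · simp [hk]
  have hH_AB : (rAB ρ).IsHermitian := by
    rw [hAB]; exact Matrix.isHermitian_mul_conjTranspose_self A₁
  have hH_E : (rE ρ).IsHermitian := by
    rw [hE]
    have h2 := Matrix.isHermitian_mul_conjTranspose_self A₁ᴴ
    rw [Matrix.conjTranspose_conjTranspose] at h2
    exact h2.transpose
  have hH_dAB : (dephaseA (rAB ρ)).IsHermitian := by
    rw [hdAB]
    have hb : (Matrix.blockDiagonal fun k => Cm k * (Cm k)ᴴ).IsHermitian := by
      rw [Matrix.IsHermitian, Matrix.blockDiagonal_conjTranspose]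
      exact congrArg _ (funext fun k => Matrix.isHermitian_mul_conjTranspose_self (Cm k))
    exact hb.submatrix _
  have hH_dAE : (dephaseA (rAE ρ)).IsHermitian := by
    rw [hdAE]
    have hb : (Matrix.blockDiagonal fun k => ((Cm k)ᴴ * Cm k)ᵀ).IsHermitian := by
      rw [Matrix.IsHermitian, Matrix.blockDiagonal_conjTranspose]
      refine congrArg _ (funext fun k => ?_)
      have h2 := Matrix.isHermitian_mul_conjTranspose_self (Cm k)ᴴ
      rw [Matrix.conjTranspose_conjTranspose] at h2
      exact h2.transpose
    exact hb.submatrix _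
  have hdet1 : ∀ x : ℂ, x ≠ 0 → (x • 1 - rAB ρ).det * x ^ Fintype.card e
      = (x • 1 - rE ρ).det * x ^ Fintype.card (Fin d × b) := by
    intro x hx
    rw [hAB, hE, det_transpose_trick]
    exact det_AB_BA A₁ A₁ᴴ hx
  have hdet2 : ∀ x : ℂ, x ≠ 0 → (x • 1 - dephaseA (rAB ρ)).det * x ^ Fintype.card (Fin d × e)
      = (x • 1 - dephaseA (rAE ρ)).det * x ^ Fintype.card (Fin d × b) := by
    intro x hx
    rw [hdAB, hdAE, det_dephase_block, det_dephase_block]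
    have hpe : x ^ Fintype.card (Fin d × e) = ∏ _k : Fin d, x ^ Fintype.card e := by
      simp [Fintype.card_prod, Fintype.card_fin, Finset.prod_const, Finset.card_univ,
        ← pow_mul, mul_comm]
    have hpb : x ^ Fintype.card (Fin d × b) = ∏ _k : Fin d, x ^ Fintype.card b := by
      simp [Fintype.card_prod, Fintype.card_fin, Finset.prod_const, Finset.card_univ,
        ← pow_mul, mul_comm]
    rw [hpe, hpb, ← Finset.prod_mul_distrib, ← Finset.prod_mul_distrib]
    refine Finset.prod_congr rfl fun k _ => ?_
    rw [det_transpose_trick]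
    exact det_AB_BA (Cm k) (Cm k)ᴴ hx
  have eq1 : vN (rAB ρ) = vN (rE ρ) := vN_eq_of_det hH_AB hH_E hdet1
  have eq2 : vN (dephaseA (rAB ρ)) = vN (dephaseA (rAE ρ)) := vN_eq_of_det hH_dAB hH_dAE hdet2
  rw [eq1, eq2]
  ring
end
end

section
/- Maassen–Uffink entropic uncertainty relation for mutually unbiased bases in dimension 2 (or for the Fourier-conjugate bases in dimension d): for any density operator ρ on ℂ^d, H(Z)_ρ + H(X)_ρ ≥ log₂ d, where H(Z)_ρ and H(X)_ρ are the Shannon entropies of the outcome distributions ⟨k|ρ|k⟩ and ⟨x̃_j|ρ|x̃_j⟩ in the standard and Fourier bases respectively. -/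
open Matrix Kronecker ComplexOrder

noncomputable section

namespace MU

lemma qomega_abs (d : ℕ) : ‖qomega d‖ = 1 := by
  have : (2 * Real.pi * Complex.I / d) = ((2 * Real.pi / d : ℝ) : ℂ) * Complex.I := by
    push_cast; ring
  rw [qomega, this, Complex.norm_exp]
  simp

lemma qomega_ne_zero (d : ℕ) : qomega d ≠ 0 := Complex.exp_ne_zero _

lemma norm_fourier_entry {d : ℕ} (hd : 0 < d) (k j : Fin d) :
    ‖fourierMat d k j‖ = (Real.sqrt d)⁻¹ := by
  have hω : ‖qomega d ^ ((j : ℕ) * (k : ℕ))‖ = 1 := by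
    rw [norm_pow, qomega_abs, one_pow]
  have hs : (0:ℝ) < Real.sqrt d := Real.sqrt_pos.mpr (by exact_mod_cast hd)
  simp only [fourierMat, Matrix.of_apply, norm_div, hω]
  rw [Complex.norm_real, Real.norm_eq_abs, abs_of_pos hs, one_div]

lemma fourier_unitary {d : ℕ} (hd : 0 < d) :
    (fourierMat d)ᴴ * fourierMat d = 1 := by
  have hprim : IsPrimitiveRoot (qomega d) d := Complex.isPrimitiveRoot_exp d hd.ne'
  have hωd : qomega d ^ d = 1 := hprim.pow_eq_one
  have habs := qomega_abs d
  have hconj : (starRingEnd ℂ) (qomega d) = (qomega d)⁻¹ :=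
    (Complex.inv_eq_conj habs).symm
  have hdc : ((d:ℝ):ℂ) ≠ 0 := by
    simp only [ne_eq, Complex.ofReal_eq_zero, Nat.cast_eq_zero]
    omega
  ext j j'
  have key : ∑ k : Fin d, (starRingEnd ℂ) (qomega d ^ ((j:ℕ) * (k:ℕ))) * qomega d ^ ((j':ℕ) * (k:ℕ))
      = if j = j' then (d : ℂ) else 0 := by
    have hterm : ∀ k : Fin d,
        (starRingEnd ℂ) (qomega d ^ ((j:ℕ) * (k:ℕ))) * qomega d ^ ((j':ℕ) * (k:ℕ))
        = ((qomega d)⁻¹ ^ (j:ℕ) * qomega d ^ (j':ℕ)) ^ (k:ℕ) := by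
      intro k
      rw [map_pow, hconj, mul_pow, ← pow_mul, ← pow_mul]
    simp only [hterm]
    set x : ℂ := (qomega d)⁻¹ ^ (j:ℕ) * qomega d ^ (j':ℕ) with hx
    have hxd : x ^ d = 1 := by
      rw [hx, mul_pow, ← pow_mul, ← pow_mul, Nat.mul_comm (j:ℕ) d, Nat.mul_comm (j':ℕ) d,
        pow_mul, pow_mul, inv_pow, hωd, inv_one, one_pow, one_pow, one_mul]
    by_cases h : j = j'
    · subst h
      have hx1 : x = 1 := by
        rw [hx, inv_pow, inv_mul_cancel₀ (pow_ne_zero _ (qomega_ne_zero d))]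
      simp [hx1, Finset.card_univ]
    · have hx1 : x ≠ 1 := by
        intro hcon
        apply h
        rw [hx, inv_pow, inv_mul_eq_one₀ (pow_ne_zero _ (qomega_ne_zero d))] at hcon
        exact Fin.ext (hprim.pow_inj j.isLt j'.isLt hcon)
      rw [if_neg h, Fin.sum_univ_eq_sum_range (fun k => x ^ k), geom_sum_eq hx1, hxd]
      simp
  have lhs_eq : ((fourierMat d)ᴴ * fourierMat d) j j'
      = (∑ k : Fin d, (starRingEnd ℂ) (qomega d ^ ((j:ℕ) * (k:ℕ))) * qomega d ^ ((j':ℕ) * (k:ℕ))) / d := by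
    rw [Matrix.mul_apply, Finset.sum_div]
    congr 1
    funext k
    simp only [Matrix.conjTranspose_apply, fourierMat, Matrix.of_apply, Complex.star_def,
      map_div₀, Complex.conj_ofReal]
    rw [div_mul_div_comm, ← Complex.ofReal_mul, Real.mul_self_sqrt (Nat.cast_nonneg d)]
    norm_cast
  rw [lhs_eq, key]
  by_cases h : j = j'
  · rw [if_pos h, h, Matrix.one_apply_eq, div_self (by push_cast at hdc ⊢; exact hdc)]
  · rw [if_neg h, Matrix.one_apply_ne h, zero_div]

lemma fourier_unitary' {d : ℕ} (hd : 0 < d) :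
    fourierMat d * (fourierMat d)ᴴ = 1 :=
  mul_eq_one_comm.mp (fourier_unitary hd)

noncomputable def afam (c : ℂ) (p : ℝ) (z : ℂ) : ℂ :=
  if c = 0 then 0 else (c / ‖c‖) * ((‖c‖ : ℂ) ^ ((((p/2) : ℝ) : ℂ) * (1+z)))

lemma afam_differentiable (c : ℂ) (p : ℝ) : Differentiable ℂ (afam c p) := by
  by_cases h : c = 0
  · have : afam c p = fun _ => 0 := by funext z; simp [afam, h]
    rw [this]; exact differentiable_const 0
  · have : afam c p = fun z => (c / ‖c‖) * ((‖c‖ : ℂ) ^ ((((p/2) : ℝ) : ℂ) * (1+z))) := by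
      funext z; simp [afam, h]
    rw [this]
    apply Differentiable.const_mul
    apply Differentiable.const_cpow
    · exact (differentiable_const _).mul ((differentiable_const (1:ℂ)).add differentiable_id)
    · left
      simp only [ne_eq, Complex.ofReal_eq_zero, norm_eq_zero]
      exact h

lemma afam_norm (c : ℂ) {p : ℝ} (hp : 0 < p) (z : ℂ) (hz : 0 ≤ z.re) :
    ‖afam c p z‖ = ‖c‖ ^ ((p/2) * (1+z.re)) := by
  have hexp : 0 < (p/2) * (1+z.re) := by nlinarith
  by_cases h : c = 0
  · simp only [afam, if_pos h, h, norm_zero]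
    rw [Real.zero_rpow hexp.ne']
    simp
  · simp only [afam, if_neg h, norm_mul]
    have hc : (0:ℝ) < ‖c‖ := norm_pos_iff.mpr h
    rw [norm_div, Complex.norm_real, Real.norm_eq_abs, abs_of_pos hc,
      div_self hc.ne']
    rw [Complex.norm_cpow_eq_rpow_re_of_pos hc, one_mul]
    congr 1
    simp [Complex.mul_re, Complex.add_re, Complex.add_im, Complex.ofReal_re, Complex.ofReal_im]

lemma afam_at_theta (c : ℂ) {p θ : ℝ} (h : p/2 * (1+θ) = 1) : afam c p (θ:ℂ) = c := by
  by_cases hc : c = 0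
  · simp [afam, hc]
  · simp only [afam, if_neg hc]
    have hcast : ((((p/2) : ℝ) : ℂ) * (1+(θ:ℂ))) = 1 := by
      have h2 := congrArg (Complex.ofReal) h
      push_cast at h2 ⊢
      linear_combination h2
    rw [hcast, Complex.cpow_one]
    have hc' : ((‖c‖:ℝ):ℂ) ≠ 0 := by
      simp only [ne_eq, Complex.ofReal_eq_zero, norm_eq_zero]; exact hc
    rw [div_mul_cancel₀ _ hc']

lemma bilinear {d : ℕ} (hd : 0 < d) (M : Matrix (Fin d) (Fin d) ℂ)
    (hM1 : ∀ j k, ‖M j k‖ ≤ (Real.sqrt d)⁻¹)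
    (hM2 : ∀ u : Fin d → ℂ, ∑ j, ‖M.mulVec u j‖^2 ≤ ∑ k, ‖u k‖^2)
    (w v : Fin d → ℂ) {θ : ℝ} (hθ : θ ∈ Set.Ioo (0:ℝ) 1) :
    ‖∑ j, w j * M.mulVec v j‖ ≤
      ((Real.sqrt d)⁻¹) ^ θ *
        ((∑ j, ‖w j‖ ^ (2/(1+θ))) * (∑ k, ‖v k‖ ^ (2/(1+θ)))) ^ ((1+θ)/2) := by
  obtain ⟨hθ0, hθ1⟩ := hθ
  set p : ℝ := 2/(1+θ) with hpdef
  have h1θ : (0:ℝ) < 1 + θ := by linarith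
  have hp : 0 < p := by positivity
  have hpθ : p/2 * (1+θ) = 1 := by
    rw [hpdef]; field_simp
  set W : ℝ := ∑ j, ‖w j‖ ^ p with hW
  set V : ℝ := ∑ k, ‖v k‖ ^ p with hV
  have hW0 : 0 ≤ W := Finset.sum_nonneg fun j _ => Real.rpow_nonneg (norm_nonneg _) _
  have hV0 : 0 ≤ V := Finset.sum_nonneg fun k _ => Real.rpow_nonneg (norm_nonneg _) _
  have hWV : (0:ℝ) ≤ W * V := mul_nonneg hW0 hV0
  have hsd : (0:ℝ) < (Real.sqrt d)⁻¹ := by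
    rw [inv_pos]; exact Real.sqrt_pos.mpr (by exact_mod_cast hd)
  set h : ℂ → ℂ := fun z => ∑ j, ∑ k, afam (w j) p z * M j k * afam (v k) p z with hdef
  have hsum : ∀ z, h z = ∑ j, afam (w j) p z * (M.mulVec (fun k => afam (v k) p z)) j := by
    intro z
    rw [hdef]
    apply Finset.sum_congr rfl; intro j _
    rw [Matrix.mulVec, dotProduct, Finset.mul_sum]
    apply Finset.sum_congr rfl; intro k _; ring
  have hval : h (θ:ℂ) = ∑ j, w j * M.mulVec v j := by
    rw [hdef]
    simp only [afam_at_theta _ hpθ]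
    apply Finset.sum_congr rfl; intro j _
    rw [Matrix.mulVec, dotProduct, Finset.mul_sum]
    apply Finset.sum_congr rfl; intro k _; ring
  have hdiff : Differentiable ℂ h := by
    apply Differentiable.fun_sum; intro j _
    apply Differentiable.fun_sum; intro k _
    exact ((afam_differentiable (w j) p).mul (differentiable_const (M j k))).mul
      (afam_differentiable (v k) p)
  -- uniform bound on the strip
  have hbound : ∀ z : ℂ, z.re ∈ Set.Icc (0:ℝ) 1 → ‖h z‖ ≤
      ∑ j, ∑ k, (‖w j‖ ^ (p/2) + ‖w j‖ ^ p) * (Real.sqrt d)⁻¹ *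
        (‖v k‖ ^ (p/2) + ‖v k‖ ^ p) := by
    intro z hz
    have hfam : ∀ c : ℂ, ‖afam c p z‖ ≤ ‖c‖ ^ (p/2) + ‖c‖ ^ p := by
      intro c
      rw [afam_norm c hp z hz.1]
      rcases le_total ‖c‖ 1 with hc | hc
      · rcases eq_or_lt_of_le (norm_nonneg c) with hc0 | hc0
        · rw [← hc0, Real.zero_rpow (by nlinarith [hz.1] : (0:ℝ) < p/2 * (1+z.re)).ne',
            Real.zero_rpow (by positivity : (0:ℝ) < p/2).ne', Real.zero_rpow hp.ne']
          norm_num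
        · have h1 : ‖c‖ ^ ((p/2) * (1+z.re)) ≤ ‖c‖ ^ (p/2) := by
            apply Real.rpow_le_rpow_of_exponent_ge hc0 hc
            nlinarith [hz.1]
          have h2 : (0:ℝ) ≤ ‖c‖ ^ p := Real.rpow_nonneg (norm_nonneg _) _
          linarith
      · have h1 : ‖c‖ ^ ((p/2) * (1+z.re)) ≤ ‖c‖ ^ p := by
          apply Real.rpow_le_rpow_of_exponent_le hc
          nlinarith [hz.2]
        have h2 : (0:ℝ) ≤ ‖c‖ ^ (p/2) := Real.rpow_nonneg (norm_nonneg _) _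
        linarith
    calc ‖h z‖ ≤ ∑ j, ∑ k, ‖afam (w j) p z * M j k * afam (v k) p z‖ := by
          refine (norm_sum_le _ _).trans (Finset.sum_le_sum fun j _ => norm_sum_le _ _)
      _ ≤ _ := by
          apply Finset.sum_le_sum; intro j _
          apply Finset.sum_le_sum; intro k _
          rw [norm_mul, norm_mul]
          have h1 := hfam (w j); have h2 := hfam (v k); have h3 := hM1 j k
          have n1 : (0:ℝ) ≤ ‖afam (w j) p z‖ := norm_nonneg _
          have n2 : (0:ℝ) ≤ ‖afam (v k) p z‖ := norm_nonneg _
          have n3 : (0:ℝ) ≤ ‖M j k‖ := norm_nonneg _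
          have n4 : (0:ℝ) ≤ ‖w j‖ ^ (p/2) + ‖w j‖ ^ p := by positivity
          exact mul_le_mul (mul_le_mul h1 h3 n3 n4) h2 n2 (by positivity)
  have hB : BddAbove ((norm ∘ h) '' (Complex.HadamardThreeLines.verticalClosedStrip 0 1)) := by
    refine ⟨∑ j, ∑ k, (‖w j‖ ^ (p/2) + ‖w j‖ ^ p) * (Real.sqrt d)⁻¹ *
        (‖v k‖ ^ (p/2) + ‖v k‖ ^ p), ?_⟩
    rintro y ⟨z, hz, rfl⟩
    exact hbound z hz
  have hsq : ∀ x : ℝ, 0 ≤ x → (x ^ (p/2)) ^ 2 = x ^ p := by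
    intro x hx
    rw [sq, ← Real.rpow_add' hx (by positivity : p/2 + p/2 ≠ 0)]
    congr 1; ring
  -- edge 0
  have hedge0 : ∀ z : ℂ, z.re = 0 → ‖h z‖ ≤ Real.sqrt (W * V) := by
    intro z hzre
    have hz0 : (0:ℝ) ≤ z.re := le_of_eq hzre.symm
    have hnorm : ∀ c : ℂ, ‖afam c p z‖ = ‖c‖ ^ (p/2) := by
      intro c; rw [afam_norm c hp z hz0, hzre]
      norm_num
    set b : Fin d → ℂ := fun k => afam (v k) p z with hb
    set S : ℝ := ∑ j, ‖afam (w j) p z‖ * ‖M.mulVec b j‖ with hS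
    have hS0 : 0 ≤ S := Finset.sum_nonneg fun j _ => by positivity
    have step1 : ‖h z‖ ≤ S := by
      rw [hsum z, hS]
      refine (norm_sum_le _ _).trans ?_
      apply Finset.sum_le_sum; intro j _; rw [norm_mul]
    have step2 : S ^ 2 ≤ W * V := by
      calc S ^ 2 ≤ (∑ j, ‖afam (w j) p z‖^2) * (∑ j, ‖M.mulVec b j‖^2) :=
            Finset.sum_mul_sq_le_sq_mul_sq _ _ _
        _ ≤ W * V := by
            apply mul_le_mul
            · apply le_of_eq
              rw [hW]
              apply Finset.sum_congr rfl; intro j _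
              rw [hnorm, hsq _ (norm_nonneg _)]
            · calc (∑ j, ‖M.mulVec b j‖^2) ≤ ∑ k, ‖b k‖^2 := hM2 b
                _ = V := by
                    rw [hV]
                    apply Finset.sum_congr rfl; intro k _
                    rw [hb]
                    simp only []
                    rw [hnorm, hsq _ (norm_nonneg _)]
            · positivity
            · exact hW0
    calc ‖h z‖ ≤ S := step1
      _ = Real.sqrt (S^2) := (Real.sqrt_sq hS0).symm
      _ ≤ Real.sqrt (W * V) := Real.sqrt_le_sqrt step2
  -- edge 1
  have hedge1 : ∀ z : ℂ, z.re = 1 → ‖h z‖ ≤ (Real.sqrt d)⁻¹ * (W * V) := by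
    intro z hzre
    have hnorm : ∀ c : ℂ, ‖afam c p z‖ = ‖c‖ ^ p := by
      intro c
      rw [afam_norm c hp z (by rw [hzre]; norm_num), hzre]
      congr 1; ring
    calc ‖h z‖ ≤ ∑ j, ∑ k, ‖afam (w j) p z * M j k * afam (v k) p z‖ := by
          refine (norm_sum_le _ _).trans (Finset.sum_le_sum fun j _ => norm_sum_le _ _)
      _ ≤ ∑ j, ∑ k, ‖w j‖^p * (Real.sqrt d)⁻¹ * ‖v k‖^p := by
          apply Finset.sum_le_sum; intro j _
          apply Finset.sum_le_sum; intro k _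
          rw [norm_mul, norm_mul, hnorm, hnorm]
          have h3 := hM1 j k
          have n1 : (0:ℝ) ≤ ‖w j‖ ^ p := Real.rpow_nonneg (norm_nonneg _) _
          have n2 : (0:ℝ) ≤ ‖v k‖ ^ p := Real.rpow_nonneg (norm_nonneg _) _
          have n3 : (0:ℝ) ≤ ‖M j k‖ := norm_nonneg _
          exact mul_le_mul (mul_le_mul le_rfl h3 n3 n1) le_rfl n2 (by positivity)
      _ = (Real.sqrt d)⁻¹ * (W * V) := by
          rw [hW, hV, Finset.sum_mul_sum, Finset.mul_sum]
          apply Finset.sum_congr rfl; intro j _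
          rw [Finset.mul_sum]
          apply Finset.sum_congr rfl; intro k _
          ring
  -- three lines
  have hzmem : (θ:ℂ) ∈ Complex.HadamardThreeLines.verticalClosedStrip 0 1 := by
    simp only [Complex.HadamardThreeLines.verticalClosedStrip, Set.mem_preimage,
      Complex.ofReal_re, Set.mem_Icc]
    exact ⟨hθ0.le, hθ1.le⟩
  have h3 := Complex.HadamardThreeLines.norm_le_interp_of_mem_verticalClosedStrip₀₁' h hzmem
    (hdiff.diffContOnCl) hB
    (fun z hz => hedge0 z hz)
    (fun z hz => hedge1 z hz)
  rw [hval, Complex.ofReal_re] at h3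
  calc ‖∑ j, w j * M.mulVec v j‖
      ≤ Real.sqrt (W * V) ^ (1 - θ) * ((Real.sqrt d)⁻¹ * (W * V)) ^ θ := h3
    _ = ((Real.sqrt d)⁻¹) ^ θ * (W * V) ^ ((1+θ)/2) := by
        have hne : (1:ℝ)/2*(1-θ)+θ ≠ 0 := by nlinarith
        rw [Real.sqrt_eq_rpow, ← Real.rpow_mul hWV, Real.mul_rpow hsd.le hWV,
          mul_left_comm, ← Real.rpow_add' hWV hne]
        have he : (1:ℝ)/2*(1-θ)+θ = (1+θ)/2 := by ring
        rw [he]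
    _ = _ := rfl

lemma rpow_two' (x : ℝ) : x ^ (2:ℝ) = x ^ 2 := by
  rw [show (2:ℝ) = ((2:ℕ):ℝ) by norm_num, Real.rpow_natCast]

lemma key_ineq (hd : 0 < d) (M : Matrix (Fin d) (Fin d) ℂ)
    (hM1 : ∀ j k, ‖M j k‖ ≤ (Real.sqrt d)⁻¹)
    (hM2 : ∀ u : Fin d → ℂ, ∑ j, ‖M.mulVec u j‖^2 ≤ ∑ k, ‖u k‖^2)
    (v : Fin d → ℂ) {θ : ℝ} (hθ : θ ∈ Set.Ioo (0:ℝ) 1) :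
    (∑ j, ‖M.mulVec v j‖ ^ (2/(1-θ))) ^ ((1-θ)/2) ≤
      ((Real.sqrt d)⁻¹) ^ θ * (∑ k, ‖v k‖ ^ (2/(1+θ))) ^ ((1+θ)/2) := by
  obtain ⟨hθ0, hθ1⟩ := hθ
  have h1θ : (0:ℝ) < 1 + θ := by linarith
  have h1θ' : (0:ℝ) < 1 - θ := by linarith
  set p : ℝ := 2/(1+θ) with hpdef
  set q : ℝ := 2/(1-θ) with hqdef
  have hq2 : 0 < q - 2 := by
    rw [hqdef]
    rw [lt_sub_iff_add_lt, zero_add, lt_div_iff₀ h1θ']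
    nlinarith
  have hq1 : 0 < q - 1 := by linarith
  have hq0 : 0 < q := by linarith
  have hp0 : 0 < p := by positivity
  have hmul : ∀ r : ℝ, 0 ≤ r → r * r ^ (q-2:ℝ) = r ^ (q-1:ℝ) := by
    intro r hr
    rcases eq_or_lt_of_le hr with h0 | h0
    · rw [← h0, Real.zero_rpow hq2.ne', Real.zero_rpow hq1.ne', mul_zero]
    · nth_rewrite 1 [← Real.rpow_one r]
      rw [← Real.rpow_add h0]; congr 1; ring
  have hmul2 : ∀ r : ℝ, 0 ≤ r → r^2 * r ^ (q-2:ℝ) = r ^ (q:ℝ) := by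
    intro r hr
    rcases eq_or_lt_of_le hr with h0 | h0
    · rw [← h0, Real.zero_rpow hq2.ne', Real.zero_rpow hq0.ne', mul_zero]
    · rw [← Real.rpow_natCast r 2, ← Real.rpow_add h0]
      congr 1; push_cast; ring
  set y : Fin d → ℂ := M.mulVec v with hy
  set w : Fin d → ℂ := fun j => (starRingEnd ℂ) (y j) * ((‖y j‖ ^ (q-2:ℝ) : ℝ) : ℂ) with hw
  set Q : ℝ := ∑ j, ‖y j‖ ^ (q:ℝ) with hQ
  set V : ℝ := ∑ k, ‖v k‖ ^ (p:ℝ) with hV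
  have hQ0 : 0 ≤ Q := Finset.sum_nonneg fun j _ => Real.rpow_nonneg (norm_nonneg _) _
  have hV0 : 0 ≤ V := Finset.sum_nonneg fun k _ => Real.rpow_nonneg (norm_nonneg _) _
  have hsd : (0:ℝ) < (Real.sqrt d)⁻¹ := by
    rw [inv_pos]; exact Real.sqrt_pos.mpr (by exact_mod_cast hd)
  have hwnorm : ∀ j, ‖w j‖ = ‖y j‖ ^ (q-1:ℝ) := by
    intro j
    rw [hw]
    simp only []
    rw [norm_mul, RCLike.norm_conj, Complex.norm_real,
      Real.norm_eq_abs, abs_of_nonneg (Real.rpow_nonneg (norm_nonneg _) _)]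
    exact hmul _ (norm_nonneg _)
  have hwp : ∀ j, ‖w j‖ ^ (p:ℝ) = ‖y j‖ ^ (q:ℝ) := by
    intro j
    rw [hwnorm j, ← Real.rpow_mul (norm_nonneg _)]
    congr 1
    rw [hqdef, hpdef]
    field_simp
    ring
  have hsum : ∑ j, w j * M.mulVec v j = ((Q : ℝ) : ℂ) := by
    rw [hQ]
    push_cast
    apply Finset.sum_congr rfl; intro j _
    rw [hw]
    simp only []
    have : (starRingEnd ℂ) (y j) * ((‖y j‖ ^ (q-2:ℝ) : ℝ) : ℂ) * (M.mulVec v) j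
        = (y j * (starRingEnd ℂ) (y j)) * ((‖y j‖ ^ (q-2:ℝ) : ℝ) : ℂ) := by
      rw [← hy]; ring
    rw [this, Complex.mul_conj, Complex.normSq_eq_norm_sq,
      ← Complex.ofReal_mul, hmul2 _ (norm_nonneg _)]
  have hbil := bilinear hd M hM1 hM2 w v ⟨hθ0, hθ1⟩
  rw [hsum] at hbil
  rw [Complex.norm_real, Real.norm_eq_abs, abs_of_nonneg hQ0] at hbil
  have hWQ : (∑ j, ‖w j‖ ^ (2/(1+θ))) = Q := by
    rw [hQ]; exact Finset.sum_congr rfl fun j _ => hwp j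
  rw [hWQ] at hbil
  -- hbil : Q ≤ (√d)⁻¹^θ * (Q * V)^((1+θ)/2)
  rcases eq_or_lt_of_le hQ0 with hQz | hQpos
  · rw [← hQz, Real.zero_rpow (by positivity : (0:ℝ) < (1-θ)/2).ne']
    positivity
  · have ha : (0:ℝ) < (1+θ)/2 := by linarith
    have hT : (0:ℝ) < Q ^ ((1+θ)/2) := Real.rpow_pos_of_pos hQpos _
    rw [Real.mul_rpow hQpos.le hV0] at hbil
    have hstep : Q ^ ((1-θ)/2) = Q / Q ^ ((1+θ)/2) := by
      rw [eq_div_iff hT.ne', ← Real.rpow_add hQpos,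
        show (1-θ)/2 + (1+θ)/2 = (1:ℝ) by ring, Real.rpow_one]
    rw [hstep, div_le_iff₀ hT]
    calc Q ≤ (Real.sqrt d)⁻¹ ^ θ * (Q ^ ((1+θ)/2) * V ^ ((1+θ)/2)) := hbil
      _ = (Real.sqrt d)⁻¹ ^ θ * V ^ ((1+θ)/2) * Q ^ ((1+θ)/2) := by ring

lemma deriv_step {d : ℕ} (hd : 0 < d) (u w : Fin d → ℝ)
    (hu0 : ∀ k, 0 ≤ u k) (hw0 : ∀ j, 0 ≤ w j)
    (hu2 : ∑ k, u k ^ (2:ℝ) = 1) (hw2 : ∑ j, w j ^ (2:ℝ) = 1)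
    (key : ∀ θ : ℝ, θ ∈ Set.Ioo (0:ℝ) 1 →
      (∑ j, w j ^ (2/(1-θ))) ^ ((1-θ)/2) ≤
        ((Real.sqrt d)⁻¹) ^ θ * (∑ k, u k ^ (2/(1+θ))) ^ ((1+θ)/2)) :
    Real.log d ≤ (∑ k, Real.negMulLog (u k ^ (2:ℝ))) + (∑ j, Real.negMulLog (w j ^ (2:ℝ))) := by
  set V : ℝ → ℝ := fun θ => ∑ k, u k ^ (2/(1+θ)) with hVdef
  set Q : ℝ → ℝ := fun θ => ∑ j, w j ^ (2/(1-θ)) with hQdef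
  set Hu : ℝ := ∑ k, Real.negMulLog (u k ^ (2:ℝ)) with hHu
  set Hw : ℝ := ∑ j, Real.negMulLog (w j ^ (2:ℝ)) with hHw
  have hV0 : V 0 = 1 := by
    have h : V 0 = ∑ k, u k ^ (2:ℝ) := by
      rw [hVdef]
      apply Finset.sum_congr rfl; intro k _; norm_num
    rw [h, hu2]
  have hQ0 : Q 0 = 1 := by
    have h : Q 0 = ∑ j, w j ^ (2:ℝ) := by
      rw [hQdef]
      apply Finset.sum_congr rfl; intro j _; norm_num
    rw [h, hw2]
  -- positivity of V and Q on [0,1)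
  have hupos : ∃ k, 0 < u k := by
    by_contra hcon
    push_neg at hcon
    have : ∀ k, u k = 0 := fun k => le_antisymm (hcon k) (hu0 k)
    rw [Finset.sum_eq_zero (fun k _ => by rw [this k, Real.zero_rpow (by norm_num : (2:ℝ) ≠ 0)])] at hu2
    norm_num at hu2
  have hwpos : ∃ j, 0 < w j := by
    by_contra hcon
    push_neg at hcon
    have : ∀ j, w j = 0 := fun j => le_antisymm (hcon j) (hw0 j)
    rw [Finset.sum_eq_zero (fun j _ => by rw [this j, Real.zero_rpow (by norm_num : (2:ℝ) ≠ 0)])] at hw2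
    norm_num at hw2
  have hVpos : ∀ θ : ℝ, 0 < V θ := by
    intro θ
    obtain ⟨k0, hk0⟩ := hupos
    apply Finset.sum_pos' (fun k _ => Real.rpow_nonneg (hu0 k) _)
    exact ⟨k0, Finset.mem_univ _, Real.rpow_pos_of_pos hk0 _⟩
  have hQpos : ∀ θ : ℝ, 0 < Q θ := by
    intro θ
    obtain ⟨j0, hj0⟩ := hwpos
    apply Finset.sum_pos' (fun j _ => Real.rpow_nonneg (hw0 j) _)
    exact ⟨j0, Finset.mem_univ _, Real.rpow_pos_of_pos hj0 _⟩
  -- derivative of V at 0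
  have hVd : HasDerivAt V Hu 0 := by
    rw [hVdef, hHu]
    apply HasDerivAt.fun_sum
    intro k _
    by_cases hk : u k = 0
    · have hev : (fun θ : ℝ => u k ^ (2/(1+θ))) =ᶠ[nhds (0:ℝ)] fun _ => (0:ℝ) := by
        filter_upwards [Ioo_mem_nhds (by norm_num : (-1/2:ℝ) < 0) (by norm_num : (0:ℝ) < 1/2)]
          with θ hθ
        rw [hk, Real.zero_rpow]
        have : (0:ℝ) < 1 + θ := by cases hθ; linarith
        positivity
      have h0 : Real.negMulLog (u k ^ (2:ℝ)) = 0 := by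
        rw [hk, Real.zero_rpow (by norm_num : (2:ℝ) ≠ 0), Real.negMulLog_zero]
      rw [h0]
      exact (hasDerivAt_const (0:ℝ) (0:ℝ)).congr_of_eventuallyEq hev
    · have hku : 0 < u k := lt_of_le_of_ne (hu0 k) (Ne.symm hk)
      have hg : HasDerivAt (fun θ:ℝ => 2/(1+θ)) (-2) 0 := by
        have h1 : HasDerivAt (fun θ:ℝ => 1+θ) 1 0 := (hasDerivAt_id (0:ℝ)).const_add 1
        have h2 := (h1.inv (by norm_num)).const_mul (2:ℝ)
        have : (fun θ:ℝ => 2 * (1+θ)⁻¹) = fun θ:ℝ => 2/(1+θ) := by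
          funext θ; rw [div_eq_mul_inv]
        change HasDerivAt (fun θ:ℝ => 2 * (_ + θ)⁻¹) _ _ at h2
        rw [this] at h2
        convert h2 using 1
        norm_num
      have hb := (Real.hasStrictDerivAt_const_rpow hku (2/(1+(0:ℝ)))).hasDerivAt
      have hcomp := HasDerivAt.comp (0:ℝ) hb hg
      refine hcomp.congr_deriv ?_
      simp only [Real.negMulLog_def]
      have h20 : 2/(1+(0:ℝ)) = (2:ℝ) := by norm_num
      rw [h20, Real.log_rpow hku]
      ring
  -- derivative of Q at 0
  have hQd : HasDerivAt Q (-Hw) 0 := by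
    rw [hQdef, hHw]
    rw [show -(∑ j, Real.negMulLog (w j ^ (2:ℝ))) = ∑ j, -Real.negMulLog (w j ^ (2:ℝ)) by
      rw [Finset.sum_neg_distrib]]
    apply HasDerivAt.fun_sum
    intro j _
    by_cases hj : w j = 0
    · have hev : (fun θ : ℝ => w j ^ (2/(1-θ))) =ᶠ[nhds (0:ℝ)] fun _ => (0:ℝ) := by
        filter_upwards [Ioo_mem_nhds (by norm_num : (-1/2:ℝ) < 0) (by norm_num : (0:ℝ) < 1/2)]
          with θ hθ
        rw [hj, Real.zero_rpow]
        have : (0:ℝ) < 1 - θ := by cases hθ; linarith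
        positivity
      have h0 : -Real.negMulLog (w j ^ (2:ℝ)) = 0 := by
        rw [hj, Real.zero_rpow (by norm_num : (2:ℝ) ≠ 0), Real.negMulLog_zero, neg_zero]
      rw [h0]
      exact (hasDerivAt_const (0:ℝ) (0:ℝ)).congr_of_eventuallyEq hev
    · have hjw : 0 < w j := lt_of_le_of_ne (hw0 j) (Ne.symm hj)
      have hg : HasDerivAt (fun θ:ℝ => 2/(1-θ)) (2) 0 := by
        have h1 : HasDerivAt (fun θ:ℝ => 1-θ) (-1) 0 := by
          simpa using ((hasDerivAt_id (0:ℝ)).const_sub 1)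
        have h2 := (h1.inv (by norm_num)).const_mul (2:ℝ)
        have : (fun θ:ℝ => 2 * (1-θ)⁻¹) = fun θ:ℝ => 2/(1-θ) := by
          funext θ; rw [div_eq_mul_inv]
        change HasDerivAt (fun θ:ℝ => 2 * (1 - θ)⁻¹) _ _ at h2
        rw [this] at h2
        convert h2 using 1
        norm_num
      have hb := (Real.hasStrictDerivAt_const_rpow hjw (2/(1-(0:ℝ)))).hasDerivAt
      have hcomp := HasDerivAt.comp (0:ℝ) hb hg
      refine hcomp.congr_deriv ?_
      simp only [Real.negMulLog_def]
      have h20 : 2/(1-(0:ℝ)) = (2:ℝ) := by norm_num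
      rw [h20, Real.log_rpow hjw]
      ring
  -- the function g
  set g : ℝ → ℝ := fun θ =>
    (1+θ)/2 * Real.log (V θ) - (1-θ)/2 * Real.log (Q θ) - θ/2 * Real.log d with hgdef
  have hg0 : g 0 = 0 := by
    rw [hgdef]; simp only []
    rw [hV0, hQ0, Real.log_one]
    ring
  set D : ℝ := Hu/2 + Hw/2 - Real.log d/2 with hDdef
  have hgd : HasDerivAt g D 0 := by
    rw [hgdef]
    have hlogV : HasDerivAt (fun θ => Real.log (V θ)) (Hu / V 0) 0 := hVd.log (hVpos 0).ne'
    have hlogQ : HasDerivAt (fun θ => Real.log (Q θ)) ((-Hw) / Q 0) 0 := hQd.log (hQpos 0).ne'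
    have ha : HasDerivAt (fun θ:ℝ => (1+θ)/2) (1/2) 0 := by
      have := ((hasDerivAt_id (0:ℝ)).const_add 1).div_const 2
      simpa using this
    have hb : HasDerivAt (fun θ:ℝ => (1-θ)/2) (-(1/2)) 0 := by
      have := ((hasDerivAt_id (0:ℝ)).const_sub 1).div_const 2
      refine this.congr_deriv ?_
      norm_num
    have hc : HasDerivAt (fun θ:ℝ => θ/2 * Real.log d) (Real.log d/2) 0 := by
      have := (((hasDerivAt_id (0:ℝ)).div_const 2)).mul_const (Real.log d)
      refine this.congr_deriv ?_
      ring
    have h1 := (ha.mul hlogV).sub (hb.mul hlogQ)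
    have h2 := h1.sub hc
    refine h2.congr_deriv ?_
    rw [hV0, hQ0, Real.log_one, hDdef]
    ring
  -- nonnegativity of g on (0,1)
  have hgnn : ∀ θ ∈ Set.Ioo (0:ℝ) 1, 0 ≤ g θ := by
    intro θ hθ
    obtain ⟨hθ0, hθ1⟩ := hθ
    have h1θ : (0:ℝ) < 1 + θ := by linarith
    have h1θ' : (0:ℝ) < 1 - θ := by linarith
    have hsd : (0:ℝ) < (Real.sqrt d)⁻¹ := by
      rw [inv_pos]; exact Real.sqrt_pos.mpr (by exact_mod_cast hd)
    have hk := key θ ⟨hθ0, hθ1⟩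
    have hlhs : (0:ℝ) < (Q θ) ^ ((1-θ)/2) := Real.rpow_pos_of_pos (hQpos θ) _
    have hlog := Real.log_le_log hlhs hk
    rw [Real.log_rpow (hQpos θ)] at hlog
    rw [Real.log_mul (Real.rpow_pos_of_pos hsd _).ne' (Real.rpow_pos_of_pos (hVpos θ) _).ne'] at hlog
    rw [Real.log_rpow (hVpos θ)] at hlog
    rw [Real.log_rpow hsd] at hlog
    rw [Real.log_inv, Real.log_sqrt (Nat.cast_nonneg d)] at hlog
    rw [hgdef]; simp only []
    nlinarith [hlog]
  -- conclude D ≥ 0 via right limit of slopes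
  have hslope : Filter.Tendsto (slope g 0) (nhdsWithin 0 (Set.Ioi (0:ℝ))) (nhds D) := by
    have := hasDerivAt_iff_tendsto_slope.mp hgd
    exact this.mono_left (nhdsWithin_mono 0 (fun x hx => ne_of_gt hx))
  have hev : ∀ᶠ θ in nhdsWithin 0 (Set.Ioi (0:ℝ)), 0 ≤ slope g 0 θ := by
    have hmem : Set.Ioo (0:ℝ) 1 ∈ nhdsWithin 0 (Set.Ioi (0:ℝ)) :=
      Ioo_mem_nhdsGT_of_mem (by constructor <;> norm_num)
    filter_upwards [hmem] with θ hθ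
    rw [slope_def_field, hg0, sub_zero, sub_zero]
    exact div_nonneg (hgnn θ hθ) (le_of_lt hθ.1)
  have hD0 : 0 ≤ D := ge_of_tendsto hslope hev
  rw [hDdef] at hD0
  rw [hHu, hHw] at hD0
  linarith

lemma pure_case {d : ℕ} (hd : 0 < d) (M : Matrix (Fin d) (Fin d) ℂ)
    (hM1 : ∀ j k, ‖M j k‖ ≤ (Real.sqrt d)⁻¹)
    (hM2 : ∀ u : Fin d → ℂ, ∑ j, ‖M.mulVec u j‖^2 ≤ ∑ k, ‖u k‖^2)
    (c : Fin d → ℂ) (hc : ∑ k, ‖c k‖^2 = 1) (hMc : ∑ j, ‖M.mulVec c j‖^2 = 1) :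
    Real.log d ≤ (∑ k, Real.negMulLog (‖c k‖^2)) + (∑ j, Real.negMulLog (‖M.mulVec c j‖^2)) := by
  have h := deriv_step hd (fun k => ‖c k‖) (fun j => ‖M.mulVec c j‖)
    (fun k => norm_nonneg _) (fun j => norm_nonneg _)
    (by simp only [rpow_two']; exact hc) (by simp only [rpow_two']; exact hMc)
    (fun θ hθ => key_ineq hd M hM1 hM2 c hθ)
  simp only [rpow_two'] at h
  exact h

lemma dot_self_norm {d : ℕ} (y : Fin d → ℂ) :
    (star y) ⬝ᵥ y = ((∑ k, ‖y k‖^2 : ℝ) : ℂ) := by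
  rw [dotProduct]
  push_cast
  apply Finset.sum_congr rfl; intro k _
  rw [Pi.star_apply, Complex.star_def, mul_comm, Complex.mul_conj, Complex.normSq_eq_norm_sq]
  norm_cast

lemma isometry_mulVec {d : ℕ} (A : Matrix (Fin d) (Fin d) ℂ) (hA : Aᴴ * A = 1)
    (u : Fin d → ℂ) : ∑ j, ‖A.mulVec u j‖^2 = ∑ k, ‖u k‖^2 := by
  have h1 : (star (A.mulVec u)) ⬝ᵥ (A.mulVec u) = star u ⬝ᵥ u := by
    rw [Matrix.star_mulVec, Matrix.dotProduct_mulVec, Matrix.vecMul_vecMul, hA,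
      Matrix.vecMul_one]
  rw [dot_self_norm, dot_self_norm] at h1
  exact_mod_cast h1

lemma unitary_col_norm {d : ℕ} (A : Matrix (Fin d) (Fin d) ℂ) (hA : Aᴴ * A = 1) (i : Fin d) :
    ∑ k, ‖A k i‖^2 = 1 := by
  have h1 : (Aᴴ * A) i i = 1 := by rw [hA]; exact Matrix.one_apply_eq i
  rw [Matrix.mul_apply] at h1
  have h2 : ∀ k, Aᴴ i k * A k i = ((‖A k i‖^2 : ℝ) : ℂ) := by
    intro k
    rw [Matrix.conjTranspose_apply, Complex.star_def, mul_comm, Complex.mul_conj,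
      Complex.normSq_eq_norm_sq]
  rw [Finset.sum_congr rfl (fun k _ => h2 k)] at h1
  exact_mod_cast h1

lemma diag_entry_re {d : ℕ} (B : Matrix (Fin d) (Fin d) ℂ) (lam : Fin d → ℝ) (k : Fin d) :
    ((B * Matrix.diagonal (fun i => ((lam i : ℝ) : ℂ)) * Bᴴ) k k).re
      = ∑ i, lam i * ‖B k i‖^2 := by
  have h1 : (B * Matrix.diagonal (fun i => ((lam i : ℝ) : ℂ)) * Bᴴ) k k
      = ∑ i, ((lam i * ‖B k i‖^2 : ℝ) : ℂ) := by
    rw [Matrix.mul_apply]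
    apply Finset.sum_congr rfl; intro i _
    rw [Matrix.mul_diagonal, Matrix.conjTranspose_apply, Complex.star_def]
    have : B k i * ((lam i : ℝ):ℂ) * (starRingEnd ℂ) (B k i)
        = ((lam i : ℝ):ℂ) * (B k i * (starRingEnd ℂ) (B k i)) := by ring
    rw [this, Complex.mul_conj, Complex.normSq_eq_norm_sq]
    norm_cast
  rw [h1, Complex.re_sum]
  apply Finset.sum_congr rfl; intro i _
  rw [Complex.ofReal_re]

lemma jensen_step {d : ℕ} (lam : Fin d → ℝ) (hlam0 : ∀ i, 0 ≤ lam i)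
    (hlam1 : ∑ i, lam i = 1) (x : Fin d → ℝ) (hx : ∀ i, 0 ≤ x i) :
    ∑ i, lam i * Real.negMulLog (x i) ≤ Real.negMulLog (∑ i, lam i * x i) := by
  have h := Real.concaveOn_negMulLog.le_map_sum (t := Finset.univ)
    (fun i _ => hlam0 i) hlam1 (fun i _ => Set.mem_Ici.mpr (hx i))
  simpa [smul_eq_mul] using h


end MU

open MU

/-- Maassen–Uffink entropic uncertainty relation for the standard
and Fourier bases: H(Z)_ρ + H(X)_ρ ≥ log₂ d. -/
theorem maassen_uffink (d : ℕ) [NeZero d] (ρ : Matrix (Fin d) (Fin d) ℂ)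
    (hρ : IsDensity ρ) :
    (∑ k : Fin d, -((ρ k k).re * Real.logb 2 ((ρ k k).re))) +
      (∑ j : Fin d,
        -((((fourierMat d)ᴴ * ρ * fourierMat d) j j).re *
          Real.logb 2 ((((fourierMat d)ᴴ * ρ * fourierMat d) j j).re)))
      ≥ Real.logb 2 d := by
  have hd : 0 < d := Nat.pos_of_ne_zero (NeZero.ne d)
  have hH : ρ.IsHermitian := hρ.1.1
  set lam : Fin d → ℝ := hH.eigenvalues with hlamdef
  set U : Matrix (Fin d) (Fin d) ℂ := (hH.eigenvectorUnitary : Matrix (Fin d) (Fin d) ℂ)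
    with hUdef
  have hcast : (RCLike.ofReal ∘ lam : Fin d → ℂ) = fun i => ((lam i : ℝ) : ℂ) := rfl
  have hspec : ρ = U * Matrix.diagonal (fun i => ((lam i : ℝ) : ℂ)) * Uᴴ := by
    have := hH.spectral_theorem
    rw [hcast] at this
    rw [← Matrix.star_eq_conjTranspose]
    exact this
  have hUU : U * star U = 1 := Matrix.mem_unitaryGroup_iff.mp hH.eigenvectorUnitary.2
  have hsUU : Uᴴ * U = 1 := by
    rw [← Matrix.star_eq_conjTranspose]
    exact mul_eq_one_comm.mp hUU
  have hlam0 : ∀ i, 0 ≤ lam i := fun i => hρ.1.eigenvalues_nonneg i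
  -- sum of eigenvalues is 1
  have hlam1 : ∑ i, lam i = 1 := by
    have h1 : ρ.trace = ∑ i, ((lam i : ℝ) : ℂ) := by
      nth_rewrite 1 [hspec]
      rw [Matrix.trace_mul_cycle, hsUU, Matrix.one_mul, Matrix.trace_diagonal]
    rw [hρ.2] at h1
    have h2 : ((∑ i, lam i : ℝ) : ℂ) = ((1:ℝ):ℂ) := by
      push_cast
      rw [← h1]
    exact_mod_cast h2
  set B : Matrix (Fin d) (Fin d) ℂ := (fourierMat d)ᴴ * U with hBdef
  have hBU : Bᴴ * B = 1 := by
    rw [hBdef, Matrix.conjTranspose_mul, Matrix.conjTranspose_conjTranspose,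
      Matrix.mul_assoc, ← Matrix.mul_assoc (fourierMat d), fourier_unitary' hd,
      Matrix.one_mul, hsUU]
  have hqform : (fourierMat d)ᴴ * ρ * fourierMat d
      = B * Matrix.diagonal (fun i => ((lam i : ℝ) : ℂ)) * Bᴴ := by
    nth_rewrite 1 [hspec]
    rw [hBdef, Matrix.conjTranspose_mul, Matrix.conjTranspose_conjTranspose]
    simp only [Matrix.mul_assoc]
  -- entry formulas
  have hp : ∀ k, (ρ k k).re = ∑ i, lam i * ‖U k i‖^2 := by
    intro k
    conv_lhs => rw [hspec]
    exact diag_entry_re U lam k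
  have hq : ∀ j, (((fourierMat d)ᴴ * ρ * fourierMat d) j j).re = ∑ i, lam i * ‖B j i‖^2 := by
    intro j
    conv_lhs => rw [hqform]
    exact diag_entry_re B lam j
  -- hypotheses for the pure-state bound with M = (fourierMat d)ᴴ
  have hM1 : ∀ j k, ‖(fourierMat d)ᴴ j k‖ ≤ (Real.sqrt d)⁻¹ := by
    intro j k
    rw [Matrix.conjTranspose_apply, Complex.star_def, RCLike.norm_conj]
    exact le_of_eq (norm_fourier_entry hd k j)
  have hFF : ((fourierMat d)ᴴ)ᴴ * (fourierMat d)ᴴ = 1 := by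
    rw [Matrix.conjTranspose_conjTranspose]
    exact fourier_unitary' hd
  have hM2 : ∀ u : Fin d → ℂ, ∑ j, ‖(fourierMat d)ᴴ.mulVec u j‖^2 ≤ ∑ k, ‖u k‖^2 :=
    fun u => le_of_eq (isometry_mulVec _ hFF u)
  -- per-column pure-state bound
  have hpure : ∀ i, Real.log d ≤
      (∑ k, Real.negMulLog (‖U k i‖^2)) + (∑ j, Real.negMulLog (‖B j i‖^2)) := by
    intro i
    have hmv : ((fourierMat d)ᴴ.mulVec (fun k => U k i)) = fun j => B j i := by
      funext j
      rw [hBdef, Matrix.mul_apply, Matrix.mulVec, dotProduct]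
    have hcol : ∑ k, ‖U k i‖^2 = 1 := unitary_col_norm U hsUU i
    have hBcol : ∑ j, ‖(fourierMat d)ᴴ.mulVec (fun k => U k i) j‖^2 = 1 := by
      simp only [hmv]
      exact unitary_col_norm B hBU i
    have h := pure_case hd (fourierMat d)ᴴ hM1 hM2 (fun k => U k i) hcol hBcol
    simp only [hmv] at h
    exact h
  -- Jensen on each diagonal entry
  have hJp : ∑ i, lam i * (∑ k, Real.negMulLog (‖U k i‖^2)) ≤
      ∑ k, Real.negMulLog ((ρ k k).re) := by
    have hswap : ∑ i, lam i * (∑ k, Real.negMulLog (‖U k i‖^2))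
        = ∑ k, ∑ i, lam i * Real.negMulLog (‖U k i‖^2) := by
      simp_rw [Finset.mul_sum]
      exact Finset.sum_comm
    rw [hswap]
    apply Finset.sum_le_sum
    intro k _
    rw [hp k]
    exact jensen_step lam hlam0 hlam1 _ (fun i => by positivity)
  have hJq : ∑ i, lam i * (∑ j, Real.negMulLog (‖B j i‖^2)) ≤
      ∑ j, Real.negMulLog ((((fourierMat d)ᴴ * ρ * fourierMat d) j j).re) := by
    have hswap : ∑ i, lam i * (∑ j, Real.negMulLog (‖B j i‖^2))
        = ∑ j, ∑ i, lam i * Real.negMulLog (‖B j i‖^2) := by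
      simp_rw [Finset.mul_sum]
      exact Finset.sum_comm
    rw [hswap]
    apply Finset.sum_le_sum
    intro j _
    rw [hq j]
    exact jensen_step lam hlam0 hlam1 _ (fun i => by positivity)
  have hsum : Real.log d ≤ (∑ k, Real.negMulLog ((ρ k k).re)) +
      (∑ j, Real.negMulLog ((((fourierMat d)ᴴ * ρ * fourierMat d) j j).re)) := by
    calc Real.log d = ∑ i, lam i * Real.log d := by
          rw [← Finset.sum_mul, hlam1, one_mul]
      _ ≤ ∑ i, lam i * ((∑ k, Real.negMulLog (‖U k i‖^2)) +
            (∑ j, Real.negMulLog (‖B j i‖^2))) := by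
          apply Finset.sum_le_sum; intro i _
          exact mul_le_mul_of_nonneg_left (hpure i) (hlam0 i)
      _ = (∑ i, lam i * (∑ k, Real.negMulLog (‖U k i‖^2))) +
            (∑ i, lam i * (∑ j, Real.negMulLog (‖B j i‖^2))) := by
          simp_rw [mul_add]
          rw [Finset.sum_add_distrib]
      _ ≤ _ := add_le_add hJp hJq
  have hlog2 : (0:ℝ) < Real.log 2 := Real.log_pos (by norm_num)
  have hconv : ∀ x : ℝ, -(x * Real.logb 2 x) = Real.negMulLog x / Real.log 2 := by
    intro x; rw [Real.logb, Real.negMulLog]; ring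
  rw [ge_iff_le, Real.logb]
  simp only [hconv]
  rw [← Finset.sum_div, ← Finset.sum_div, ← add_div]
  gcongr
end
end
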